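/- arXiv:0804.2234 — 5 statements merged into one kernel-verified Lean document; each statement's English description precedes it below -/
import Mathlib

section
/- Let E be a finite-dimensional vector space over a complete ultrametric field K and α : E → E a linear automorphism. Then E admits a norm adapted to α; in particular, for each ρ in the set R(α) of absolute values of eigenvalues of α in an algebraic closure, there exists an ultrametric norm ‖·‖_ρ on the generalized eigenspace sum E_ρ with ‖α(x)‖_ρ = ρ·‖x‖_ρ for all x ∈ E_ρ. -/
open scoped TensorProduct NNReal
open Finset

section AuxNorm

variable {L : Type*} [Field L] (v : AbsoluteValue L ℝ)

/-- The absolute value as an `ℝ≥0`-valued function. -/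
noncomputable def vnn (a : L) : ℝ≥0 := ⟨v a, v.nonneg a⟩

@[simp] lemma vnn_coe (a : L) : (vnn v a : ℝ) = v a := rfl

@[simp] lemma vnn_zero : vnn v 0 = 0 := NNReal.coe_inj.mp (by simp)

lemma vnn_eq_zero {a : L} : vnn v a = 0 ↔ a = 0 := by
  rw [← NNReal.coe_inj]; simp

@[simp] lemma vnn_mul (a b : L) : vnn v (a * b) = vnn v a * vnn v b :=
  NNReal.coe_inj.mp (by simp)

@[simp] lemma vnn_neg (a : L) : vnn v (-a) = vnn v a :=
  NNReal.coe_inj.mp (by simp)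

@[simp] lemma vnn_one : vnn v 1 = 1 := NNReal.coe_inj.mp (by simp)

lemma vnn_add (hvu : ∀ a b : L, v (a + b) ≤ max (v a) (v b)) (a b : L) :
    vnn v (a + b) ≤ max (vnn v a) (vnn v b) := by
  rw [← NNReal.coe_le_coe, NNReal.coe_max]
  exact hvu a b

variable {W : Type*} [AddCommGroup W] [Module L W] [FiniteDimensional L W]

theorem exists_base_nnorm (hvu : ∀ a b : L, v (a + b) ≤ max (v a) (v b)) :
    ∃ B : W → ℝ≥0,
      (∀ w, B w = 0 ↔ w = 0) ∧
      (∀ (c : L) (w : W), B (c • w) = vnn v c * B w) ∧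
      (∀ w w', B (w + w') ≤ max (B w) (B w')) := by
  classical
  let b := Module.finBasis L W
  refine ⟨fun w => Finset.univ.sup fun i => vnn v (b.repr w i), ?_, ?_, ?_⟩
  · intro w
    constructor
    · intro h
      have hco : ∀ i, b.repr w i = 0 := by
        intro i
        have hle := Finset.le_sup (f := fun i => vnn v (b.repr w i)) (Finset.mem_univ i)
        exact (vnn_eq_zero v).mp (le_antisymm (le_trans hle h.le) zero_le)
      have hrepr : b.repr w = 0 := Finsupp.ext hco
      simpa using b.repr.map_eq_zero_iff.mp hrepr
    · rintro rfl
      refine le_antisymm (Finset.sup_le fun i _ => ?_) zero_le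
      simp
  · intro c w
    simp only [map_smul, Finsupp.smul_apply, smul_eq_mul, vnn_mul, NNReal.mul_finset_sup]
  · intro w w'
    refine Finset.sup_le fun i _ => ?_
    rw [map_add, Finsupp.add_apply]
    exact le_trans (vnn_add v hvu _ _)
      (max_le_max (Finset.le_sup (f := fun i => vnn v (b.repr w i)) (Finset.mem_univ i))
        (Finset.le_sup (f := fun i => vnn v (b.repr w' i)) (Finset.mem_univ i)))

theorem exists_adapted_nnorm (hvu : ∀ a b : L, v (a + b) ≤ max (v a) (v b))
    (g : Module.End L W) (μ : L) (hμ : μ ≠ 0)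
    (hnil : IsNilpotent (g - μ • (1 : Module.End L W))) :
    ∃ Nn : W → ℝ≥0,
      (∀ w, Nn w = 0 ↔ w = 0) ∧
      (∀ (c : L) (w : W), Nn (c • w) = vnn v c * Nn w) ∧
      (∀ w w', Nn (w + w') ≤ max (Nn w) (Nn w')) ∧
      (∀ w, Nn (g w) = vnn v μ * Nn w) := by
  classical
  obtain ⟨B, hB0, hBs, hBa⟩ := exists_base_nnorm v hvu (W := W)
  obtain ⟨m, hm⟩ := hnil
  set n := g - μ • (1 : Module.End L W) with hn
  set t : ℝ≥0 := (vnn v μ)⁻¹ + 1 with ht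
  have hμ0 : vnn v μ ≠ 0 := fun h => hμ ((vnn_eq_zero v).mp h)
  have ht0 : t ≠ 0 := by
    have h1 : (1 : ℝ≥0) ≤ t := le_add_self
    exact fun h => by simp [h] at h1
  have htinv : t⁻¹ < vnn v μ := by
    have hlt : (vnn v μ)⁻¹ < t := lt_add_of_pos_right _ zero_lt_one
    have := NNReal.inv_lt_inv (inv_ne_zero hμ0) hlt
    rwa [inv_inv] at this
  set Nn : W → ℝ≥0 := fun w => (Finset.range m).sup fun i => t ^ i * B ((n ^ i) w) with hNn
  have hNnz : Nn 0 = 0 := by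
    refine le_antisymm (Finset.sup_le fun i _ => ?_) zero_le
    rw [map_zero, (hB0 0).mpr rfl, mul_zero]
  have hNdef : ∀ w, Nn w = 0 ↔ w = 0 := by
    intro w
    constructor
    · intro h
      rcases Nat.eq_zero_or_pos m with hm0 | hm0
      · subst hm0
        have h1 : (1 : Module.End L W) = 0 := by simpa using hm
        calc w = (1 : Module.End L W) w := rfl
          _ = 0 := by rw [h1]; rfl
      · have h0 : (0 : ℕ) ∈ Finset.range m := Finset.mem_range.mpr hm0
        have hle := Finset.le_sup (f := fun i => t ^ i * B ((n ^ i) w)) h0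
        have : t ^ 0 * B ((n ^ 0) w) = 0 := le_antisymm (le_trans hle h.le) zero_le
        simp only [pow_zero, one_mul] at this
        exact (hB0 w).mp this
    · rintro rfl; exact hNnz
  have hNs : ∀ (c : L) (w : W), Nn (c • w) = vnn v c * Nn w := by
    intro c w
    rw [hNn]
    simp only [map_smul, hBs, NNReal.mul_finset_sup]
    exact Finset.sup_congr rfl fun i _ => by ring
  have hNa : ∀ w w', Nn (w + w') ≤ max (Nn w) (Nn w') := by
    intro w w'
    refine Finset.sup_le fun i hi => ?_
    rw [map_add]
    refine le_trans (mul_le_mul_right (hBa _ _) _) ?_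
    have hmm : t ^ i * max (B ((n ^ i) w)) (B ((n ^ i) w')) =
        max (t ^ i * B ((n ^ i) w)) (t ^ i * B ((n ^ i) w')) :=
      Monotone.map_max (fun a b h => mul_le_mul_right h _)
    rw [hmm]
    exact max_le_max (Finset.le_sup (f := fun i => t ^ i * B ((n ^ i) w)) hi)
      (Finset.le_sup (f := fun i => t ^ i * B ((n ^ i) w')) hi)
  have hNnle : ∀ w, Nn (n w) ≤ t⁻¹ * Nn w := by
    intro w
    refine Finset.sup_le fun i hi => ?_
    have hcomp : (n ^ i) (n w) = (n ^ (i + 1)) w := by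
      rw [pow_succ]; rfl
    rw [hcomp]
    rcases eq_or_lt_of_le (Nat.succ_le_of_lt (Finset.mem_range.mp hi)) with he | hlt
    · have hz : (n ^ (i + 1)) w = 0 := by rw [show i + 1 = m from he, hm]; rfl
      rw [hz, (hB0 0).mpr rfl, mul_zero]
      exact zero_le
    · have hmem : i + 1 ∈ Finset.range m := Finset.mem_range.mpr hlt
      have htt : t⁻¹ * t ^ (i + 1) = t ^ i := by
        rw [pow_succ, mul_comm (t ^ i) t, ← mul_assoc, inv_mul_cancel₀ ht0, one_mul]
      have hrw : t ^ i * B ((n ^ (i + 1)) w) = t⁻¹ * (t ^ (i + 1) * B ((n ^ (i + 1)) w)) := by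
        rw [← htt, mul_assoc]
      rw [hrw]
      exact mul_le_mul_right (Finset.le_sup (f := fun j => t ^ j * B ((n ^ j) w)) hmem) _
  have hNeq : ∀ a b, Nn b < Nn a → Nn (a + b) = Nn a := by
    intro a b h
    have hneg : Nn (-b) = Nn b := by
      have := hNs (-1) b
      simpa [neg_one_smul] using this
    refine le_antisymm (le_trans (hNa a b) (max_le le_rfl h.le)) ?_
    by_contra hlt
    push_neg at hlt
    have hle : Nn a ≤ max (Nn (a + b)) (Nn (-b)) := by
      have := hNa (a + b) (-b)
      simpa using this
    rw [hneg] at hle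
    exact absurd hle (not_le.mpr (max_lt hlt h))
  refine ⟨Nn, hNdef, hNs, hNa, fun w => ?_⟩
  have hnw : n w = g w - μ • w := by
    simp [hn, LinearMap.sub_apply, LinearMap.smul_apply]
  have hgw : g w = μ • w + n w := by rw [hnw]; abel
  by_cases hw : w = 0
  · subst hw
    rw [map_zero, hNnz, mul_zero]
  · have hpos : 0 < Nn w := pos_iff_ne_zero.mpr fun h => hw ((hNdef w).mp h)
    have h1 : Nn (n w) < Nn (μ • w) := by
      rw [hNs]
      calc Nn (n w) ≤ t⁻¹ * Nn w := hNnle w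
        _ < vnn v μ * Nn w := mul_lt_mul_of_pos_right htinv hpos
    rw [hgw, hNeq _ _ h1, hNs]

end AuxNorm


/-- The base change of a linear endomorphism to the algebraic closure. -/
noncomputable def baseChangeEnd {K : Type*} [NontriviallyNormedField K]
    {E : Type*} [AddCommGroup E] [Module K E] (α : E →ₗ[K] E) :
    Module.End (AlgebraicClosure K) (AlgebraicClosure K ⊗[K] E) :=
  LinearMap.baseChange (AlgebraicClosure K) α

/-- `R(α)`: the set of absolute values of eigenvalues of `α` over the algebraic closure,
computed with respect to an absolute value `v` on the algebraic closure. -/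
def eigAbs {K : Type*} [NontriviallyNormedField K] {E : Type*} [AddCommGroup E] [Module K E]
    (v : AbsoluteValue (AlgebraicClosure K) ℝ) (α : E →ₗ[K] E) : Set ℝ :=
  {r : ℝ | ∃ μ : AlgebraicClosure K, (baseChangeEnd α).HasEigenvalue μ ∧ v μ = r}

/-- `E_ρ`: the `α`-invariant `K`-subspace of `E` corresponding to all eigenvalues of
absolute value `ρ`, i.e. `E ∩ ⊕_{|λ| = ρ} (generalized λ-eigenspace over the closure)`. -/
noncomputable def specSubspace {K : Type*} [NontriviallyNormedField K] {E : Type*}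
    [AddCommGroup E] [Module K E] (v : AbsoluteValue (AlgebraicClosure K) ℝ)
    (α : E →ₗ[K] E) (ρ : ℝ) : Submodule K E :=
  Submodule.comap ((TensorProduct.mk K (AlgebraicClosure K) E) 1)
    (Submodule.restrictScalars K
      (⨆ μ ∈ {μ : AlgebraicClosure K | v μ = ρ}, (baseChangeEnd α).maxGenEigenspace μ))

set_option maxHeartbeats 1600000 in
set_option synthInstance.maxHeartbeats 400000 in
/-- Every linear automorphism `α` of a finite-dimensional vector space `E` over a complete
ultrametric field admits an adapted norm; in particular, each `E_ρ` (`ρ ∈ R(α)`) carries an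
ultrametric norm with `‖α(x)‖_ρ = ρ·‖x‖_ρ`. -/
theorem exists_adapted_norm {K : Type*} [NontriviallyNormedField K] [IsUltrametricDist K]
    [CompleteSpace K] {E : Type*} [AddCommGroup E] [Module K E] [FiniteDimensional K E]
    (v : AbsoluteValue (AlgebraicClosure K) ℝ)
    (hvext : ∀ t : K, v (algebraMap K (AlgebraicClosure K) t) = ‖t‖)
    (hvultra : ∀ a b : AlgebraicClosure K, v (a + b) ≤ max (v a) (v b))
    (α : E ≃ₗ[K] E) :
    (∃ N : E → ℝ,
      (∀ x, 0 ≤ N x) ∧ (∀ x, N x = 0 ↔ x = 0) ∧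
      (∀ (t : K) (x : E), N (t • x) = ‖t‖ * N x) ∧
      (∀ x y : E, N (x + y) ≤ max (N x) (N y)) ∧
      (∀ (s : Finset ℝ) (hs : s.Nonempty) (f : ℝ → E),
        (∀ ρ ∈ s, f ρ ∈ specSubspace v (α : E →ₗ[K] E) ρ) →
        N (∑ ρ ∈ s, f ρ) = s.sup' hs fun ρ => N (f ρ)) ∧
      (∀ ρ ∈ eigAbs v (α : E →ₗ[K] E), ∀ x ∈ specSubspace v (α : E →ₗ[K] E) ρ,
        N (α x) = ρ * N x)) ∧
    (∀ ρ ∈ eigAbs v (α : E →ₗ[K] E), ∃ Nρ : E → ℝ,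
      (∀ x ∈ specSubspace v (α : E →ₗ[K] E) ρ, 0 ≤ Nρ x) ∧
      (∀ x ∈ specSubspace v (α : E →ₗ[K] E) ρ, (Nρ x = 0 ↔ x = 0)) ∧
      (∀ (t : K), ∀ x ∈ specSubspace v (α : E →ₗ[K] E) ρ, Nρ (t • x) = ‖t‖ * Nρ x) ∧
      (∀ x ∈ specSubspace v (α : E →ₗ[K] E) ρ, ∀ y ∈ specSubspace v (α : E →ₗ[K] E) ρ,
        Nρ (x + y) ≤ max (Nρ x) (Nρ y)) ∧
      (∀ x ∈ specSubspace v (α : E →ₗ[K] E) ρ, Nρ (α x) = ρ * Nρ x)) := by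
  classical
  set L := AlgebraicClosure K with hL
  set β : Module.End L (L ⊗[K] E) := baseChangeEnd (α : E →ₗ[K] E) with hβ
  haveI : Module.Finite L (L ⊗[K] E) := inferInstance
  -- injectivity of β
  have hβinj : Function.Injective β := by
    have hli : Function.LeftInverse (LinearMap.baseChange L (α.symm : E →ₗ[K] E)) β := by
      intro y
      have : (LinearMap.baseChange L (α.symm : E →ₗ[K] E)).comp β = LinearMap.id := by
        rw [hβ]
        show _ = LinearMap.id
        rw [baseChangeEnd, ← LinearMap.baseChange_comp]
        have : (α.symm : E →ₗ[K] E).comp (α : E →ₗ[K] E) = LinearMap.id := by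
          ext x; simp
        rw [this, LinearMap.baseChange_id]
      exact DFunLike.congr_fun this y
    exact hli.injective
  have h0 : ¬ β.HasEigenvalue 0 := by
    intro h
    rw [Module.End.hasEigenvalue_iff, Module.End.eigenspace_zero] at h
    exact h (LinearMap.ker_eq_bot.mpr hβinj)
  -- generalized eigenspaces
  set G : L → Submodule L (L ⊗[K] E) := β.maxGenEigenspace with hG
  have hmapsTo : ∀ μ, Set.MapsTo β (G μ) (G μ) := fun μ =>
    Module.End.mapsTo_maxGenEigenspace_of_comm rfl μ
  set βres : ∀ μ : L, Module.End L (G μ) :=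
    fun μ => LinearMap.restrict β (fun x hx => hmapsTo μ hx) with hβres
  have hInt : DirectSum.IsInternal G :=
    DirectSum.isInternal_submodule_of_iSupIndep_of_iSup_eq_top
      β.independent_maxGenEigenspace β.iSup_maxGenEigenspace_eq_top
  set D : (L ⊗[K] E) ≃ₗ[L] DirectSum L (fun μ => ↥(G μ)) :=
    (LinearEquiv.ofBijective (DirectSum.coeLinearMap G) hInt).symm with hD
  have hD_self : ∀ (ν : L) (y : L ⊗[K] E) (hy : y ∈ G ν), D y ν = ⟨y, hy⟩ :=
    fun ν y hy => hInt.ofBijective_coeLinearMap_of_mem hy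
  have hD_ne : ∀ (ν μ : L), ν ≠ μ → ∀ (y : L ⊗[K] E), y ∈ G ν → D y μ = 0 :=
    fun ν μ hne y hy => hInt.ofBijective_coeLinearMap_of_mem_ne hne hy
  have hGbot : ∀ μ : L, ¬ β.HasEigenvalue μ → G μ = ⊥ := by
    intro μ h
    by_contra hne
    have hunif : β.HasUnifEigenvalue μ ⊤ := hne
    exact h ((Module.End.hasUnifEigenvalue_iff_hasUnifEigenvalue_one
      (by exact_mod_cast WithTop.top_pos)).mp hunif)
  have hG0 : G 0 = ⊥ := hGbot 0 h0
  set S : Finset L := insert 0 (Module.End.finite_hasEigenvalue β).toFinset with hSdef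
  have hS0 : (0 : L) ∈ S := Finset.mem_insert_self _ _
  have hSne : S.Nonempty := ⟨0, hS0⟩
  have hSmem : ∀ μ : L, β.HasEigenvalue μ → μ ∈ S := fun μ h =>
    Finset.mem_insert_of_mem ((Set.Finite.mem_toFinset _).mpr h)
  have hGS : ∀ μ : L, μ ∉ S → G μ = ⊥ := fun μ h => hGbot μ fun he => h (hSmem μ he)
  -- per-eigenvalue adapted norms
  have key : ∀ μ : L, ∃ Nn : G μ → ℝ≥0,
      (∀ w, Nn w = 0 ↔ w = 0) ∧
      (∀ (c : L) (w : G μ), Nn (c • w) = vnn v c * Nn w) ∧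
      (∀ w w', Nn (w + w') ≤ max (Nn w) (Nn w')) ∧
      (∀ w, Nn (βres μ w) = vnn v μ * Nn w) := by
    intro μ
    by_cases hμ : μ = 0
    · subst hμ
      have hzero : ∀ w : G (0 : L), w = 0 := by
        intro w
        exact Subtype.ext (by simpa using (Submodule.mem_bot L).mp (hG0.le w.2))
      exact ⟨0, fun w => ⟨fun _ => hzero w, fun _ => rfl⟩,
        fun c w => by simp, fun w w' => by simp,
        fun w => by simp⟩
    · refine exists_adapted_nnorm v hvultra (W := G μ) (βres μ) μ hμ ?_
      have hnil := Module.End.isNilpotent_restrict_maxGenEigenspace_sub_algebraMap β μ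
      convert hnil using 1
      ext w
      rfl
  choose Nf hNf0 hNfsmul hNfadd hNfβ using key
  have hNfzero : ∀ μ : L, Nf μ 0 = 0 := fun μ => (hNf0 μ 0).mpr rfl
  -- components vanish outside S
  have hGSzero : ∀ (y : L ⊗[K] E) (μ : L), μ ∉ S → D y μ = 0 := by
    intro y μ h
    exact Subtype.ext (by simpa using (Submodule.mem_bot L).mp ((hGS μ h).le (D y μ).2))
  -- commutation of D with β
  have hDcomm : ∀ (y : L ⊗[K] E) (μ : L), D (β y) μ = βres μ (D y μ) := by
    intro y
    have hy : y ∈ ⨆ ν, G ν := by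
      rw [hG, β.iSup_maxGenEigenspace_eq_top]; trivial
    refine Submodule.iSup_induction (motive := fun y => ∀ μ, D (β y) μ = βres μ (D y μ))
      G hy ?_ ?_ ?_
    · intro ν z hz μ
      by_cases hμν : μ = ν
      · subst hμν
        rw [hD_self μ z hz, hD_self μ (β z) (hmapsTo μ hz)]
        apply Subtype.ext
        simp [hβres, LinearMap.restrict_apply]
      · rw [hD_ne ν μ (fun h => hμν h.symm) z hz,
          hD_ne ν μ (fun h => hμν h.symm) (β z) (hmapsTo ν hz), map_zero]
    · intro μ
      simp
    · intro a b ha hb μ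
      rw [map_add, map_add, map_add, DirectSum.add_apply, DirectSum.add_apply,
        ha μ, hb μ, map_add]
  -- support of D on the ρ-part
  have hDsupp : ∀ (ρ : ℝ) (y : L ⊗[K] E),
      y ∈ (⨆ μ ∈ {μ : L | v μ = ρ}, G μ) → ∀ μ : L, v μ ≠ ρ → D y μ = 0 := by
    intro ρ y hy μ hμ
    refine Submodule.iSup_induction
      (motive := fun y => D y μ = 0) (fun ν => ⨆ _ : ν ∈ {ν : L | v ν = ρ}, G ν) hy ?_ ?_ ?_
    · intro ν z hz
      have hz' : z ∈ ⨆ _ : ν ∈ {ν : L | v ν = ρ}, G ν := hz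
      by_cases hν : v ν = ρ
      · rw [iSup_pos (show ν ∈ {ν : L | v ν = ρ} from hν)] at hz'
        exact hD_ne ν μ (fun h => hμ (h ▸ hν)) z hz'
      · rw [iSup_neg (show ν ∉ {ν : L | v ν = ρ} from hν)] at hz'
        rw [(Submodule.mem_bot L).mp hz', map_zero]
        simp
    · simp
    · intro a b ha hb
      rw [map_add, DirectSum.add_apply, ha, hb, add_zero]
  -- the global NNReal-valued norm on the tensor product
  set NF : L ⊗[K] E → ℝ≥0 := fun y => S.sup fun μ => Nf μ (D y μ) with hNF
  have hNF0 : NF 0 = 0 := by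
    refine le_antisymm (Finset.sup_le fun μ _ => ?_) zero_le
    rw [map_zero, DirectSum.zero_apply, hNfzero]
  have hNFdef : ∀ y, NF y = 0 ↔ y = 0 := by
    intro y
    constructor
    · intro h
      have hcomp : ∀ μ : L, D y μ = 0 := by
        intro μ
        by_cases hμ : μ ∈ S
        · have hle := Finset.le_sup (f := fun μ => Nf μ (D y μ)) hμ
          exact (hNf0 μ _).mp (le_antisymm (le_trans hle h.le) zero_le)
        · exact hGSzero y μ hμ
      have : D y = 0 := DFinsupp.ext hcomp
      exact (LinearEquiv.map_eq_zero_iff D).mp this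
    · rintro rfl; exact hNF0
  have hNFsmul : ∀ (c : L) (y : L ⊗[K] E), NF (c • y) = vnn v c * NF y := by
    intro c y
    rw [hNF]
    simp only [map_smul, DirectSum.smul_apply, hNfsmul, NNReal.mul_finset_sup]
  have hNFadd : ∀ y y', NF (y + y') ≤ max (NF y) (NF y') := by
    intro y y'
    refine Finset.sup_le fun μ hμ => ?_
    rw [map_add, DirectSum.add_apply]
    exact le_trans (hNfadd μ _ _)
      (max_le_max (Finset.le_sup (f := fun μ => Nf μ (D y μ)) hμ)
        (Finset.le_sup (f := fun μ => Nf μ (D y' μ)) hμ))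
  -- scaling under β on the ρ-part
  have hNFβ : ∀ (ρ : ℝ) (y : L ⊗[K] E),
      y ∈ (⨆ μ ∈ {μ : L | v μ = ρ}, G μ) → NF (β y) = ρ.toNNReal * NF y := by
    intro ρ y hy
    have hterm : ∀ μ ∈ S, Nf μ (D (β y) μ) = ρ.toNNReal * Nf μ (D y μ) := by
      intro μ _
      rw [hDcomm, hNfβ]
      by_cases h : D y μ = 0
      · rw [h, hNfzero, mul_zero, mul_zero]
      · have hvμ : v μ = ρ := by
          by_contra hne
          exact h (hDsupp ρ y hy μ hne)
        have hρnn : vnn v μ = ρ.toNNReal := by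
          rw [← NNReal.coe_inj, vnn_coe, hvμ, Real.coe_toNNReal ρ (hvμ ▸ v.nonneg μ)]
        rw [hρnn]
    calc NF (β y) = S.sup fun μ => Nf μ (D (β y) μ) := rfl
      _ = S.sup fun μ => ρ.toNNReal * Nf μ (D y μ) := Finset.sup_congr rfl hterm
      _ = ρ.toNNReal * NF y := (NNReal.mul_finset_sup _ _ _).symm
  -- isometric direct sum property
  have hNFsum : ∀ (s : Finset ℝ) (hs : s.Nonempty) (y : ℝ → L ⊗[K] E),
      (∀ ρ ∈ s, y ρ ∈ (⨆ μ ∈ {μ : L | v μ = ρ}, G μ)) →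
      NF (∑ ρ ∈ s, y ρ) = s.sup' hs fun ρ => NF (y ρ) := by
    intro s hs y hmem
    have hDsum : ∀ μ : L, D (∑ ρ ∈ s, y ρ) μ = ∑ ρ ∈ s, D (y ρ) μ := by
      intro μ
      rw [map_sum]
      exact DFinsupp.finset_sum_apply _ _ _
    apply le_antisymm
    · refine Finset.sup_le fun μ hμS => ?_
      by_cases hv : v μ ∈ s
      · have hsum : D (∑ ρ ∈ s, y ρ) μ = D (y (v μ)) μ := by
          rw [hDsum]
          refine Finset.sum_eq_single_of_mem (v μ) hv fun ρ hρ hne => ?_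
          exact hDsupp ρ (y ρ) (hmem ρ hρ) μ (fun h => hne h.symm)
        rw [hsum]
        exact le_trans (Finset.le_sup (f := fun μ' => Nf μ' (D (y (v μ)) μ')) hμS)
          (Finset.le_sup' (f := fun ρ => NF (y ρ)) hv)
      · have hz : ∀ ρ ∈ s, D (y ρ) μ = 0 := fun ρ hρ =>
          hDsupp ρ (y ρ) (hmem ρ hρ) μ (fun h => hv (h ▸ hρ))
        rw [hDsum, Finset.sum_eq_zero hz, hNfzero]
        exact zero_le
    · refine Finset.sup'_le _ _ fun ρ hρ => ?_
      refine Finset.sup_le fun μ hμS => ?_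
      by_cases h : D (y ρ) μ = 0
      · rw [h, hNfzero]
        exact zero_le
      · have hvμ : v μ = ρ := by
          by_contra hne
          exact h (hDsupp ρ (y ρ) (hmem ρ hρ) μ hne)
        have hsum : D (∑ ρ' ∈ s, y ρ') μ = D (y ρ) μ := by
          rw [hDsum]
          refine Finset.sum_eq_single_of_mem ρ hρ fun ρ' hρ' hne => ?_
          exact hDsupp ρ' (y ρ') (hmem ρ' hρ') μ (fun hc => hne (by rw [← hc, hvμ]))
        calc Nf μ (D (y ρ) μ) = Nf μ (D (∑ ρ' ∈ s, y ρ') μ) := by rw [hsum]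
          _ ≤ NF (∑ ρ' ∈ s, y ρ') := Finset.le_sup (f := fun μ' => Nf μ' (D (∑ ρ' ∈ s, y ρ') μ')) hμS
  -- injectivity of the embedding of E
  have hinj : ∀ x : E, (1 : L) ⊗ₜ[K] x = 0 → x = 0 := by
    intro x hx
    set b := Module.Free.chooseBasis K E with hb
    have hco : ∀ i, b.repr x i = 0 := by
      intro i
      have h1 : (b.baseChange L).repr ((1 : L) ⊗ₜ[K] x) i = b.repr x i • (1 : L) :=
        Module.Basis.baseChange_repr_tmul (S := L) b 1 x i
      rw [hx, map_zero, Finsupp.coe_zero, Pi.zero_apply] at h1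
      have h2 : algebraMap K L (b.repr x i) = 0 := by
        rw [Algebra.algebraMap_eq_smul_one]
        exact h1.symm
      exact (algebraMap K L).injective (by rw [h2, map_zero])
    have hrx : b.repr x = 0 := Finsupp.ext hco
    simpa using b.repr.map_eq_zero_iff.mp hrx
  -- membership translation
  have hmemV : ∀ (ρ : ℝ) (x : E), x ∈ specSubspace v (α : E →ₗ[K] E) ρ ↔
      (1 : L) ⊗ₜ[K] x ∈ (⨆ μ ∈ {μ : L | v μ = ρ}, G μ) := fun ρ x => Iff.rfl
  have heig_nonneg : ∀ ρ ∈ eigAbs v (α : E →ₗ[K] E), 0 ≤ ρ := by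
    rintro ρ ⟨μ, hμ, rfl⟩
    exact v.nonneg μ
  -- relating β to α on pure tensors
  have hβtmul : ∀ x : E, β ((1 : L) ⊗ₜ[K] x) = (1 : L) ⊗ₜ[K] (α x) := fun x =>
    LinearMap.baseChange_tmul (α : E →ₗ[K] E) 1 x
  have hsm : ∀ (t : K) (x : E),
      (1 : L) ⊗ₜ[K] (t • x) = algebraMap K L t • ((1 : L) ⊗ₜ[K] x) := by
    intro t x
    rw [TensorProduct.tmul_smul, algebraMap_smul]
  set N : E → ℝ := fun x => (NF ((1 : L) ⊗ₜ[K] x) : ℝ) with hN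
  have hN1 : ∀ x, 0 ≤ N x := fun x => (NF _).coe_nonneg
  have hN2 : ∀ x, N x = 0 ↔ x = 0 := by
    intro x
    constructor
    · intro h
      exact hinj x ((hNFdef _).mp (NNReal.coe_eq_zero.mp h))
    · rintro rfl
      show (NF ((1 : L) ⊗ₜ[K] (0 : E)) : ℝ) = 0
      rw [TensorProduct.tmul_zero, hNF0, NNReal.coe_zero]
  have hN3 : ∀ (t : K) (x : E), N (t • x) = ‖t‖ * N x := by
    intro t x
    show (NF ((1 : L) ⊗ₜ[K] (t • x)) : ℝ) = ‖t‖ * (NF ((1 : L) ⊗ₜ[K] x) : ℝ)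
    rw [hsm t x, hNFsmul, NNReal.coe_mul, vnn_coe, hvext]
  have hN4 : ∀ x y : E, N (x + y) ≤ max (N x) (N y) := by
    intro x y
    show (NF ((1 : L) ⊗ₜ[K] (x + y)) : ℝ) ≤ _
    rw [TensorProduct.tmul_add]
    exact (NNReal.coe_le_coe.mpr (hNFadd _ _)).trans_eq (NNReal.coe_max _ _)
  have hN5 : ∀ (s : Finset ℝ) (hs : s.Nonempty) (f : ℝ → E),
      (∀ ρ ∈ s, f ρ ∈ specSubspace v (α : E →ₗ[K] E) ρ) →
      N (∑ ρ ∈ s, f ρ) = s.sup' hs fun ρ => N (f ρ) := by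
    intro s hs f hf
    show (NF ((1 : L) ⊗ₜ[K] (∑ ρ ∈ s, f ρ)) : ℝ) = _
    rw [TensorProduct.tmul_sum,
      hNFsum s hs _ (fun ρ hρ => (hmemV ρ (f ρ)).mp (hf ρ hρ))]
    exact Finset.comp_sup'_eq_sup'_comp hs (fun z : ℝ≥0 => (z : ℝ))
      (fun a b => by exact NNReal.coe_max a b)
  have hN6 : ∀ ρ ∈ eigAbs v (α : E →ₗ[K] E), ∀ x ∈ specSubspace v (α : E →ₗ[K] E) ρ,
      N (α x) = ρ * N x := by
    intro ρ hρ x hx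
    show (NF ((1 : L) ⊗ₜ[K] (α x)) : ℝ) = ρ * (NF ((1 : L) ⊗ₜ[K] x) : ℝ)
    rw [← hβtmul, hNFβ ρ _ ((hmemV ρ x).mp hx), NNReal.coe_mul,
      Real.coe_toNNReal ρ (heig_nonneg ρ hρ)]
  exact ⟨⟨N, hN1, hN2, hN3, hN4, hN5, hN6⟩,
    fun ρ hρ => ⟨N, fun x _ => hN1 x, fun x _ => hN2 x, fun t x _ => hN3 t x,
      fun x _ y _ => hN4 x y, fun x hx => hN6 ρ hρ x hx⟩⟩
end

section
/- Let α be a linear automorphism of a finite-dimensional vector space E over a local field, and ‖·‖ a norm adapted to α. Then for every r > 0 the ball B_r = {x : ‖x‖ < r} is tidy for α: B_r = (B_r)_+ + (B_r)_−, where (B_r)_± = B_r ∩ E_± with E_+ = ⊕_{ρ≥1}E_ρ and E_− = ⊕_{ρ≤1}E_ρ, and the increasing union ⋃_{n≥0} αⁿ((B_r)_+) is closed in E. -/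
open Filter Topology
open scoped TensorProduct

open Polynomial
set_option maxHeartbeats 1000000

section C1

private lemma pow_le_imp_le' {x y C : ℝ} (hx : 0 ≤ x) (hy : 0 ≤ y)
    (h : ∀ n : ℕ, x ^ (n + 1) ≤ C * y ^ (n + 1)) : x ≤ y := by
  by_contra hlt
  push_neg at hlt
  have hx0 : 0 < x := lt_of_le_of_lt hy hlt
  rcases eq_or_lt_of_le hy with hy0 | hy0
  · have h0 := h 0
    rw [pow_one, pow_one, ← hy0, mul_zero] at h0
    linarith
  · have h1 : 1 < x / y := (one_lt_div hy0).2 hlt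
    obtain ⟨n, hn⟩ := pow_unbounded_of_one_lt C h1
    have hn' : C < (x / y) ^ (n + 1) :=
      lt_of_lt_of_le hn (pow_le_pow_right₀ h1.le (Nat.le_succ n))
    have hyp : 0 < y ^ (n + 1) := pow_pos hy0 _
    rw [div_pow] at hn'
    have : x ^ (n + 1) < x ^ (n + 1) :=
      calc x ^ (n + 1) ≤ C * y ^ (n + 1) := h n
        _ < x ^ (n + 1) / y ^ (n + 1) * y ^ (n + 1) := mul_lt_mul_of_pos_right hn' hyp
        _ = x ^ (n + 1) := div_mul_cancel₀ _ hyp.ne'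
    exact lt_irrefl _ this

private lemma absoluteValue_algHom_le {K : Type*} [NontriviallyNormedField K] [CompleteSpace K]
    {L : Type*} [Field L] [Algebra K L] (v : AbsoluteValue L ℝ)
    (hv : ∀ t : K, v (algebraMap K L t) = ‖t‖)
    {A : Type*} [Field A] [Algebra K A] [FiniteDimensional K A]
    (φ ψ : A →ₐ[K] L) (a : A) : v (ψ a) ≤ v (φ a) := by
  letI : NormedField L := v.toNormedField
  have hnorm : ∀ x : L, ‖x‖ = v x := fun x => rfl
  letI : NormedSpace K L := ⟨fun c x => by
    rw [Algebra.smul_def, hnorm, hnorm, map_mul, hv]⟩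
  have hinj : Function.Injective φ.toLinearMap := φ.toRingHom.injective
  let e : A ≃ₗ[K] LinearMap.range φ.toLinearMap := LinearEquiv.ofInjective φ.toLinearMap hinj
  haveI : FiniteDimensional K (LinearMap.range φ.toLinearMap) :=
    Module.Finite.range φ.toLinearMap
  let g : LinearMap.range φ.toLinearMap →ₗ[K] L := ψ.toLinearMap ∘ₗ (e.symm : _ →ₗ[K] A)
  have hg : Continuous g := g.continuous_of_finiteDimensional
  obtain ⟨C, hC0, hC⟩ := ContinuousLinearMap.bound ⟨g, hg⟩
  have key : ∀ b : A, v (ψ b) ≤ C * v (φ b) := by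
    intro b
    have h1 : g (e b) = ψ b := by
      simp only [g, LinearMap.coe_comp, Function.comp_apply, LinearEquiv.coe_coe,
        LinearEquiv.symm_apply_apply]
      rfl
    have h2 : ‖e b‖ = v (φ b) := rfl
    have h3 := hC (e b)
    rw [show ({ toLinearMap := g, cont := hg } : _ →L[K] L) (e b) = g (e b) from rfl, h1, h2] at h3
    exact h3
  apply pow_le_imp_le' (v.nonneg _) (v.nonneg _) (C := C)
  intro n
  calc v (ψ a) ^ (n + 1) = v (ψ (a ^ (n + 1))) := by rw [map_pow, map_pow]
    _ ≤ C * v (φ (a ^ (n + 1))) := key _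
    _ = C * v (φ a) ^ (n + 1) := by rw [map_pow, map_pow]

private lemma absoluteValue_algHom_eq {K : Type*} [NontriviallyNormedField K] [CompleteSpace K]
    {L : Type*} [Field L] [Algebra K L] (v : AbsoluteValue L ℝ)
    (hv : ∀ t : K, v (algebraMap K L t) = ‖t‖)
    {A : Type*} [Field A] [Algebra K A] [FiniteDimensional K A]
    (φ ψ : A →ₐ[K] L) (a : A) : v (ψ a) = v (φ a) :=
  le_antisymm (absoluteValue_algHom_le v hv φ ψ a) (absoluteValue_algHom_le v hv ψ φ a)

/-- Two elements of `L` with the same minimal polynomial over `K` have equal absolute value. -/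
private lemma absoluteValue_eq_of_minpoly_eq {K : Type*} [NontriviallyNormedField K]
    [CompleteSpace K] {L : Type*} [Field L] [Algebra K L] (v : AbsoluteValue L ℝ)
    (hv : ∀ t : K, v (algebraMap K L t) = ‖t‖) {μ₁ μ₂ : L}
    (h1 : IsIntegral K μ₁) (heq : minpoly K μ₁ = minpoly K μ₂) : v μ₁ = v μ₂ := by
  have hirr : Irreducible (minpoly K μ₁) := minpoly.irreducible h1
  haveI : Fact (Irreducible (minpoly K μ₁)) := ⟨hirr⟩
  have hne : minpoly K μ₁ ≠ 0 := minpoly.ne_zero h1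
  haveI : FiniteDimensional K (AdjoinRoot (minpoly K μ₁)) :=
    PowerBasis.finite (AdjoinRoot.powerBasis hne)
  have haev2 : (aeval μ₂) (minpoly K μ₁) = 0 := by rw [heq]; exact minpoly.aeval K μ₂
  let φ : AdjoinRoot (minpoly K μ₁) →ₐ[K] L :=
    AdjoinRoot.liftAlgHom (minpoly K μ₁) (Algebra.ofId K L) μ₁ (minpoly.aeval K μ₁)
  let ψ : AdjoinRoot (minpoly K μ₁) →ₐ[K] L := AdjoinRoot.liftAlgHom (minpoly K μ₁) (Algebra.ofId K L) μ₂ haev2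
  have h5 := absoluteValue_algHom_eq v hv φ ψ (AdjoinRoot.root (minpoly K μ₁))
  have e1 : φ (AdjoinRoot.root (minpoly K μ₁)) = μ₁ := AdjoinRoot.liftAlgHom_root _ _ _ _
  have e2 : ψ (AdjoinRoot.root (minpoly K μ₁)) = μ₂ := AdjoinRoot.liftAlgHom_root _ _ _ _
  rw [e1, e2] at h5
  exact h5.symm

end C1

section Chunk2
variable {K : Type*} [NontriviallyNormedField K] {E : Type*} [AddCommGroup E] [Module K E]

private lemma baseChangeEnd_pow_tmul (α : E →ₗ[K] E) (n : ℕ) (x : E) :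
    ((baseChangeEnd α) ^ n) ((1 : AlgebraicClosure K) ⊗ₜ[K] x) = 1 ⊗ₜ[K] ((α ^ n) x) := by
  induction n with
  | zero => simp
  | succ n ih =>
    rw [pow_succ', pow_succ', Module.End.mul_apply, ih, baseChangeEnd, LinearMap.baseChange_tmul,
      Module.End.mul_apply]

private lemma baseChange_aeval_tmul (α : E →ₗ[K] E) (p : K[X]) (x : E) :
    Polynomial.aeval (baseChangeEnd α) (p.map (algebraMap K (AlgebraicClosure K)))
      ((1 : AlgebraicClosure K) ⊗ₜ[K] x) = 1 ⊗ₜ[K] (Polynomial.aeval α p x) := by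
  induction p using Polynomial.induction_on' with
  | add p q hp hq =>
    rw [Polynomial.map_add, map_add, LinearMap.add_apply, hp, hq, map_add, LinearMap.add_apply,
      TensorProduct.tmul_add]
  | monomial n a =>
    rw [Polynomial.map_monomial, Polynomial.aeval_monomial, Polynomial.aeval_monomial,
      Module.End.mul_apply, Module.End.mul_apply, baseChangeEnd_pow_tmul,
      Module.algebraMap_end_apply, Module.algebraMap_end_apply, algebraMap_smul,
      TensorProduct.tmul_smul]

end Chunk2

section KerLemmas
variable {R : Type*} [CommRing R] {M : Type*} [AddCommGroup M] [Module R M]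
variable (f : Module.End R M)

private lemma ker_aeval_coprime_le {p q : R[X]} (h : IsCoprime p q) :
    LinearMap.ker (Polynomial.aeval f (p * q)) ≤
      LinearMap.ker (Polynomial.aeval f p) ⊔ LinearMap.ker (Polynomial.aeval f q) := by
  obtain ⟨u, w, hbez⟩ := h
  intro x hx
  rw [LinearMap.mem_ker] at hx
  have hxeq : Polynomial.aeval f (w * q) x + Polynomial.aeval f (u * p) x = x := by
    rw [← LinearMap.add_apply, ← map_add, add_comm (w * q) (u * p), hbez]; simp
  have h1 : Polynomial.aeval f (w * q) x ∈ LinearMap.ker (Polynomial.aeval f p) := by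
    rw [LinearMap.mem_ker, ← Module.End.mul_apply, ← map_mul,
      show p * (w * q) = w * (p * q) by ring, map_mul, Module.End.mul_apply, hx, map_zero]
  have h2 : Polynomial.aeval f (u * p) x ∈ LinearMap.ker (Polynomial.aeval f q) := by
    rw [LinearMap.mem_ker, ← Module.End.mul_apply, ← map_mul,
      show q * (u * p) = u * (p * q) by ring, map_mul, Module.End.mul_apply, hx, map_zero]
  rw [← hxeq]
  exact Submodule.add_mem_sup h1 h2

private lemma ker_aeval_prod_le {ι : Type*} (s : Finset ι) (q : ι → R[X])
    (hcop : ∀ i ∈ s, ∀ j ∈ s, i ≠ j → IsCoprime (q i) (q j)) :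
    LinearMap.ker (Polynomial.aeval f (∏ i ∈ s, q i)) ≤
      ⨆ i ∈ s, LinearMap.ker (Polynomial.aeval f (q i)) := by
  classical
  induction s using Finset.induction_on with
  | empty => simp [Module.End.one_eq_id]
  | @insert a s ha ih =>
    rw [Finset.prod_insert ha]
    refine le_trans (ker_aeval_coprime_le f ?_) (sup_le ?_ ?_)
    · exact IsCoprime.prod_right fun j hj =>
        hcop a (Finset.mem_insert_self a s) j (Finset.mem_insert_of_mem hj)
          (fun h => ha (h ▸ hj))
    · exact le_iSup_of_le a (le_iSup_of_le (Finset.mem_insert_self a s) le_rfl)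
    · refine le_trans (ih fun i hi j hj hij =>
        hcop i (Finset.mem_insert_of_mem hi) j (Finset.mem_insert_of_mem hj) hij) ?_
      exact iSup_le fun i => iSup_le fun hi =>
        le_iSup_of_le i (le_iSup_of_le (Finset.mem_insert_of_mem hi) le_rfl)

end KerLemmas

section MkInj
variable {K : Type*} [Field K] {E : Type*} [AddCommGroup E] [Module K E]

private lemma mk_one_tmul_injective (L : Type*) [Field L] [Algebra K L] :
    Function.Injective (TensorProduct.mk K L E 1) := by
  obtain ⟨c, hc⟩ := Submodule.exists_isCompl (K ∙ (1 : L))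
  let e : K ≃ₗ[K] (K ∙ (1 : L)) := LinearEquiv.toSpanNonzeroSingleton K L 1 one_ne_zero
  let pr : L →ₗ[K] (K ∙ (1 : L)) := Submodule.linearProjOfIsCompl _ c hc
  let g : L →ₗ[K] K := (e.symm : (K ∙ (1 : L)) →ₗ[K] K) ∘ₗ pr
  have hg1 : g 1 = 1 := by
    have h1 : pr 1 = ⟨1, Submodule.mem_span_singleton_self 1⟩ :=
      Submodule.linearProjOfIsCompl_apply_left hc ⟨1, Submodule.mem_span_singleton_self 1⟩
    have h2 : e 1 = ⟨1, Submodule.mem_span_singleton_self 1⟩ := by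
      apply Subtype.ext
      simp [e, LinearEquiv.toSpanNonzeroSingleton]
    simp only [g, LinearMap.coe_comp, Function.comp_apply, LinearEquiv.coe_coe, h1, ← h2,
      LinearEquiv.symm_apply_apply]
  intro x y hxy
  have hret : ∀ z : E, (TensorProduct.lid K E)
      ((LinearMap.rTensor E g) ((TensorProduct.mk K L E 1) z)) = z := by
    intro z
    simp [hg1]
  rw [← hret x, ← hret y, hxy]
end MkInj

section Chunk3
variable {K : Type*} [NontriviallyNormedField K] [CompleteSpace K]
  {E : Type*} [AddCommGroup E] [Module K E] [FiniteDimensional K E]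
  (v : AbsoluteValue (AlgebraicClosure K) ℝ)

private lemma ker_irreducible_pow_le
    (hv : ∀ t : K, v (algebraMap K (AlgebraicClosure K) t) = ‖t‖)
    (α : E →ₗ[K] E) {π : K[X]} (hmonic : π.Monic) (hirr : Irreducible π) (k : ℕ)
    {x : E} (hx : Polynomial.aeval α (π ^ k) x = 0) :
    x ∈ ⨆ ρ ∈ eigAbs v α, specSubspace v α ρ := by
  classical
  by_cases hx0 : x = 0
  · simp [hx0]
  set L := AlgebraicClosure K with hL
  set B := baseChangeEnd α with hB
  set P : Polynomial L := (π ^ k).map (algebraMap K L) with hPdef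
  have htx : Polynomial.aeval B P ((1 : L) ⊗ₜ[K] x) = 0 := by
    rw [hPdef, baseChange_aeval_tmul, hx, TensorProduct.tmul_zero]
  have hPmonic : P.Monic := (hmonic.pow k).map _
  have hsplits : P.Splits := IsAlgClosed.splits P
  have hfact : P = ∏ μ ∈ P.roots.toFinset, (X - C μ) ^ P.roots.count μ := by
    conv_lhs => rw [hsplits.eq_prod_roots_of_monic hPmonic]
    rw [Polynomial.prod_multiset_root_eq_finset_root]
    simp [Polynomial.count_roots]
  have hker_le : ∀ (μ : L) (m : ℕ),
      LinearMap.ker (Polynomial.aeval B ((X - C μ) ^ m)) ≤ B.maxGenEigenspace μ := by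
    intro μ m z hz
    rw [LinearMap.mem_ker] at hz
    rw [Module.End.mem_maxGenEigenspace]
    refine ⟨m, ?_⟩
    have heq : Polynomial.aeval B ((X - C μ) ^ m) = (B - μ • 1) ^ m := by
      rw [map_pow, map_sub, Polynomial.aeval_X, Polynomial.aeval_C,
        Module.algebraMap_end_eq_smul_id, Module.End.one_eq_id]
    rwa [← heq]
  have hmem : (1 ⊗ₜ[K] x : L ⊗[K] E) ∈ ⨆ μ ∈ P.roots.toFinset, B.maxGenEigenspace μ := by
    have h1 : (1 ⊗ₜ[K] x : L ⊗[K] E) ∈ LinearMap.ker (Polynomial.aeval B P) := htx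
    rw [hfact] at h1
    have hcop' : ∀ i ∈ P.roots.toFinset, ∀ j ∈ P.roots.toFinset, i ≠ j →
        IsCoprime ((X - C i) ^ P.roots.count i) ((X - C j) ^ P.roots.count j) := by
      intro i _ j _ hij
      exact (Polynomial.pairwise_coprime_X_sub_C Function.injective_id hij).pow
    have h2 := ker_aeval_prod_le B P.roots.toFinset
      (fun μ => (X - C μ) ^ P.roots.count μ) hcop' h1
    have hle : (⨆ μ ∈ P.roots.toFinset,
        LinearMap.ker (Polynomial.aeval B ((X - C μ) ^ P.roots.count μ))) ≤
        ⨆ μ ∈ P.roots.toFinset, B.maxGenEigenspace μ :=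
      iSup₂_mono fun μ _ => hker_le μ _
    exact hle h2
  have htx0 : (1 ⊗ₜ[K] x : L ⊗[K] E) ≠ 0 := by
    intro h
    exact hx0 (mk_one_tmul_injective (K := K) (E := E) L (by rw [TensorProduct.mk_apply, h, map_zero]))
  have hne : P.roots.toFinset.Nonempty := by
    rcases Finset.eq_empty_or_nonempty P.roots.toFinset with h | h
    · rw [h] at hmem
      simp only [Finset.notMem_empty, iSup_false, iSup_bot, Submodule.mem_bot] at hmem
      exact absurd hmem htx0
    · exact h
  obtain ⟨μ₀, hμ₀⟩ := hne
  -- k ≠ 0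
  have hk0 : k ≠ 0 := by
    rintro rfl
    rw [pow_zero, Polynomial.map_one] at hPdef
    rw [hPdef] at hμ₀
    simp at hμ₀
  -- all roots are roots of π and have minpoly π
  have hroot : ∀ μ ∈ P.roots.toFinset, π = minpoly K μ := by
    intro μ hμ
    have h1 : Polynomial.IsRoot P μ := by
      rw [Multiset.mem_toFinset, Polynomial.mem_roots hPmonic.ne_zero] at hμ
      exact hμ
    have h2 : Polynomial.aeval μ π = 0 := by
      have : Polynomial.eval μ (π.map (algebraMap K L)) ^ k = 0 := by
        rw [← Polynomial.eval_pow, ← Polynomial.map_pow]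
        exact h1
      rw [Polynomial.aeval_def, Polynomial.eval₂_eq_eval_map]
      exact pow_eq_zero_iff hk0 |>.mp this
    exact minpoly.eq_of_irreducible_of_monic hirr h2 hmonic
  have hsame : ∀ μ ∈ P.roots.toFinset, v μ = v μ₀ := by
    intro μ hμ
    exact absoluteValue_eq_of_minpoly_eq v hv (Algebra.IsIntegral.isIntegral μ)
      (by rw [← hroot μ hμ, hroot μ₀ hμ₀])
  -- some root is an eigenvalue
  have heig : ∃ μ₁ ∈ P.roots.toFinset, B.HasEigenvalue μ₁ := by
    by_contra hcon
    push_neg at hcon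
    have hbot : ∀ μ ∈ P.roots.toFinset, B.maxGenEigenspace μ = ⊥ := by
      intro μ hμ
      by_contra hb
      exact hcon μ hμ ((Module.End.hasUnifEigenvalue_iff_hasUnifEigenvalue_one
        (k := (⊤ : ℕ∞)) (by norm_num)).mp hb)
    have hle : (⨆ μ ∈ P.roots.toFinset, B.maxGenEigenspace μ) ≤
        (⊥ : Submodule L (L ⊗[K] E)) := by
      refine iSup_le fun μ => iSup_le fun hμ => ?_
      rw [hbot μ hμ]
    exact htx0 (by simpa using hle hmem)
  obtain ⟨μ₁, hμ₁, heig₁⟩ := heig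
  have hρ : v μ₀ ∈ eigAbs v α := ⟨μ₁, heig₁, hsame μ₁ hμ₁⟩
  have hxmem : x ∈ specSubspace v α (v μ₀) := by
    rw [specSubspace, Submodule.mem_comap, Submodule.restrictScalars_mem]
    have hle : (⨆ μ ∈ P.roots.toFinset, B.maxGenEigenspace μ) ≤
        ⨆ μ ∈ {μ : L | v μ = v μ₀}, B.maxGenEigenspace μ := by
      refine iSup_le fun μ => iSup_le fun hμ => ?_
      exact le_iSup_of_le μ (le_iSup_of_le (hsame μ hμ) le_rfl)
    exact hle hmem
  exact Submodule.mem_iSup_of_mem (v μ₀) (Submodule.mem_iSup_of_mem hρ hxmem)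

private lemma mem_iSup_specSubspace
    (hv : ∀ t : K, v (algebraMap K (AlgebraicClosure K) t) = ‖t‖)
    (α : E →ₗ[K] E) (x : E) :
    x ∈ ⨆ ρ ∈ eigAbs v α, specSubspace v α ρ := by
  classical
  suffices h : ∀ (n : ℕ) (q : K[X]), q ≠ 0 → q.natDegree ≤ n → ∀ y : E,
      Polynomial.aeval α q y = 0 → y ∈ ⨆ ρ ∈ eigAbs v α, specSubspace v α ρ by
    refine h (α.charpoly.natDegree) α.charpoly α.charpoly_monic.ne_zero le_rfl x ?_
    rw [LinearMap.aeval_self_charpoly]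
    rfl
  intro n
  induction n using Nat.strong_induction_on with
  | _ n ih =>
    intro q hq hdeg y hy
    by_cases hu : IsUnit q
    · obtain ⟨c, hcu, hc⟩ := Polynomial.isUnit_iff.mp hu
      rw [← hc, Polynomial.aeval_C, Module.algebraMap_end_apply] at hy
      have : y = 0 := by
        rcases smul_eq_zero.mp hy with h | h
        · exact absurd h hcu.ne_zero
        · exact h
      simp [this]
    · obtain ⟨π₀, hirr₀, hdvd₀⟩ := WfDvdMonoid.exists_irreducible_factor hu hq
      have hπ0 : π₀ ≠ 0 := hirr₀.ne_zero
      set π := normalize π₀ with hπdef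
      have hmonic : π.Monic := Polynomial.monic_normalize hπ0
      have hirr : Irreducible π := (associated_normalize π₀).irreducible hirr₀
      have hdvd : π ∣ q := (normalize_dvd_iff).mpr hdvd₀
      obtain ⟨m, b, hbnd, hqeq⟩ := WfDvdMonoid.max_power_factor hq hirr
      have hm0 : m ≠ 0 := by
        rintro rfl
        rw [pow_zero, one_mul] at hqeq
        exact hbnd (hqeq ▸ hdvd)
      have hb0 : b ≠ 0 := fun h => hq (by rw [hqeq, h, mul_zero])
      have hcop : IsCoprime (π ^ m) b :=
        ((hirr.coprime_iff_not_dvd).mpr hbnd).pow_left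
      obtain ⟨u, w, hbez⟩ := hcop
      have hxeq : Polynomial.aeval α (w * b) y + Polynomial.aeval α (u * π ^ m) y = y := by
        rw [← LinearMap.add_apply, ← map_add, add_comm (w * b) (u * π ^ m), hbez]; simp
      have hx1 : Polynomial.aeval α (π ^ m) (Polynomial.aeval α (w * b) y) = 0 := by
        rw [← Module.End.mul_apply, ← map_mul, show π ^ m * (w * b) = w * (π ^ m * b) by ring,
          ← hqeq, map_mul, Module.End.mul_apply, hy, map_zero]
      have hx2 : Polynomial.aeval α b (Polynomial.aeval α (u * π ^ m) y) = 0 := by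
        rw [← Module.End.mul_apply, ← map_mul, show b * (u * π ^ m) = u * (π ^ m * b) by ring,
          ← hqeq, map_mul, Module.End.mul_apply, hy, map_zero]
      have hπdegpos : 0 < π.natDegree := by
        rcases Nat.eq_zero_or_pos π.natDegree with h | h
        · obtain ⟨c, hc⟩ := Polynomial.natDegree_eq_zero.mp h
          exact absurd (hc ▸ Polynomial.isUnit_C.mpr
            (IsUnit.mk0 c (fun h0 => hirr.ne_zero (by rw [← hc, h0, map_zero])))) hirr.not_isUnit
        · exact h
      have hdeglt : b.natDegree < n := by
        have h1 : q.natDegree = m * π.natDegree + b.natDegree := by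
          rw [hqeq, Polynomial.natDegree_mul (pow_ne_zero m hirr.ne_zero) hb0,
            Polynomial.natDegree_pow]
        have h2 : 1 ≤ m * π.natDegree := Nat.one_le_iff_ne_zero.mpr
          (Nat.mul_ne_zero hm0 hπdegpos.ne')
        omega
      have hmem1 := ker_irreducible_pow_le v hv α hmonic hirr m hx1
      have hmem2 := ih b.natDegree hdeglt b hb0 le_rfl _ hx2
      rw [← hxeq]
      exact Submodule.add_mem _ hmem1 hmem2
end Chunk3

section Chunk4
variable {K : Type*} [NontriviallyNormedField K]
  {E : Type*} [AddCommGroup E] [Module K E]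

private lemma mem_specSubspace_of_mapsTo (v : AbsoluteValue (AlgebraicClosure K) ℝ)
    (α₀ β : E →ₗ[K] E)
    (hc : ∀ μ : AlgebraicClosure K, Set.MapsTo (baseChangeEnd β)
      ((baseChangeEnd α₀).maxGenEigenspace μ) ((baseChangeEnd α₀).maxGenEigenspace μ))
    (ρ : ℝ) {x : E} (hx : x ∈ specSubspace v α₀ ρ) : β x ∈ specSubspace v α₀ ρ := by
  rw [specSubspace, Submodule.mem_comap, Submodule.restrictScalars_mem] at hx ⊢
  have h1 : (TensorProduct.mk K (AlgebraicClosure K) E 1) (β x)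
      = (baseChangeEnd β) ((TensorProduct.mk K (AlgebraicClosure K) E 1) x) := by
    rw [TensorProduct.mk_apply, TensorProduct.mk_apply, baseChangeEnd, LinearMap.baseChange_tmul]
  rw [h1]
  have hle : Submodule.map (baseChangeEnd β)
      (⨆ μ ∈ {μ : AlgebraicClosure K | v μ = ρ}, (baseChangeEnd α₀).maxGenEigenspace μ) ≤
      ⨆ μ ∈ {μ : AlgebraicClosure K | v μ = ρ}, (baseChangeEnd α₀).maxGenEigenspace μ := by
    rw [Submodule.map_iSup]
    refine iSup_le fun μ => ?_
    rw [Submodule.map_iSup]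
    refine iSup_le fun hμ => ?_
    refine le_trans (Submodule.map_le_iff_le_comap.mpr fun z hz => Submodule.mem_comap.mpr (hc μ hz)) ?_
    exact le_iSup_of_le μ (le_iSup_of_le hμ le_rfl)
  exact hle (Submodule.mem_map_of_mem hx)

private lemma baseChangeEnd_mul (f g : E →ₗ[K] E) :
    baseChangeEnd f * baseChangeEnd g = baseChangeEnd (f ∘ₗ g) := by
  rw [baseChangeEnd, baseChangeEnd, baseChangeEnd, LinearMap.baseChange_comp]
  rfl

end Chunk4

/-- For a linear automorphism `α` of a finite-dimensional vector space over a local field,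
equipped with a norm adapted to `α`, every ball `B_r` is tidy for `α`:
`(B_r)_± = B_r ∩ E_±`, `B_r = (B_r)_+ + (B_r)_-`, and `⋃_{n≥0} αⁿ((B_r)_+)` is closed. -/
theorem ball_tidy_for_linear_automorphism {K : Type*} [NontriviallyNormedField K]
    [CompleteSpace K] [LocallyCompactSpace K] [TotallyDisconnectedSpace K]
    {E : Type*} [NormedAddCommGroup E] [NormedSpace K E] [FiniteDimensional K E]
    (v : AbsoluteValue (AlgebraicClosure K) ℝ)
    (hvext : ∀ t : K, v (algebraMap K (AlgebraicClosure K) t) = ‖t‖)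
    (α : E ≃ₗ[K] E)
    -- the norm of `E` is adapted to `α`:
    (hult : ∀ x y : E, ‖x + y‖ ≤ max ‖x‖ ‖y‖)
    (hmax : ∀ (s : Finset ℝ) (hs : s.Nonempty) (f : ℝ → E),
      (∀ ρ ∈ s, f ρ ∈ specSubspace v (α : E →ₗ[K] E) ρ) →
      ‖∑ ρ ∈ s, f ρ‖ = s.sup' hs fun ρ => ‖f ρ‖)
    (had : ∀ ρ ∈ eigAbs v (α : E →ₗ[K] E), ∀ x ∈ specSubspace v (α : E →ₗ[K] E) ρ,
      ‖α x‖ = ρ * ‖x‖)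
    (r : ℝ) (hr : 0 < r) :
    {x : E | ∀ n : ℕ, (α⁻¹ ^ n) x ∈ {y : E | ‖y‖ < r}} =
        {y : E | ‖y‖ < r} ∩
          ↑(⨆ ρ ∈ {ρ ∈ eigAbs v (α : E →ₗ[K] E) | 1 ≤ ρ},
              specSubspace v (α : E →ₗ[K] E) ρ) ∧
      {x : E | ∀ n : ℕ, (α ^ n) x ∈ {y : E | ‖y‖ < r}} =
        {y : E | ‖y‖ < r} ∩
          ↑(⨆ ρ ∈ {ρ ∈ eigAbs v (α : E →ₗ[K] E) | ρ ≤ 1},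
              specSubspace v (α : E →ₗ[K] E) ρ) ∧
      {y : E | ‖y‖ < r} =
        {z : E | ∃ u ∈ {x : E | ∀ n : ℕ, (α⁻¹ ^ n) x ∈ {y : E | ‖y‖ < r}},
          ∃ w ∈ {x : E | ∀ n : ℕ, (α ^ n) x ∈ {y : E | ‖y‖ < r}}, z = u + w} ∧
      IsClosed (⋃ n : ℕ,
        (fun x : E => (α ^ n) x) ''
          {x : E | ∀ m : ℕ, (α⁻¹ ^ m) x ∈ {y : E | ‖y‖ < r}}) := by
  classical
  set A := (α : E →ₗ[K] E) with hA
  set Tp := {ρ ∈ eigAbs v A | 1 ≤ ρ} with hTp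
  set Tm := {ρ ∈ eigAbs v A | ρ ≤ 1} with hTm
  -- basic facts
  have hmemα : ∀ (ρ : ℝ) {x : E}, x ∈ specSubspace v A ρ → α x ∈ specSubspace v A ρ := by
    intro ρ x hx
    exact mem_specSubspace_of_mapsTo v A A
      (fun μ => Module.End.mapsTo_maxGenEigenspace_of_comm rfl μ) ρ hx
  have hcommAB : Commute (baseChangeEnd A) (baseChangeEnd (α.symm : E →ₗ[K] E)) := by
    rw [Commute, SemiconjBy, baseChangeEnd_mul, baseChangeEnd_mul,
      show A ∘ₗ (α.symm : E →ₗ[K] E) = (α.symm : E →ₗ[K] E) ∘ₗ A by ext z; simp [hA]]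
  have hmemαs : ∀ (ρ : ℝ) {x : E}, x ∈ specSubspace v A ρ → α.symm x ∈ specSubspace v A ρ := by
    intro ρ x hx
    exact mem_specSubspace_of_mapsTo v A (α.symm : E →ₗ[K] E)
      (fun μ => Module.End.mapsTo_maxGenEigenspace_of_comm hcommAB μ) ρ hx
  have hρpos : ∀ ρ ∈ eigAbs v A, 0 < ρ := by
    rintro ρ ⟨μ, heig, hvμ⟩
    have hμ0 : μ ≠ 0 := by
      rintro rfl
      obtain ⟨z, hz⟩ := heig.exists_hasEigenvector
      have h1 : (baseChangeEnd A) z = 0 := by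
        have := Module.End.mem_eigenspace_iff.mp hz.1
        rwa [zero_smul] at this
      have h2 : (baseChangeEnd (α.symm : E →ₗ[K] E)) ((baseChangeEnd A) z) = z := by
        rw [← Module.End.mul_apply, baseChangeEnd_mul,
          show (α.symm : E →ₗ[K] E) ∘ₗ A = LinearMap.id by ext w; simp [hA],
          show baseChangeEnd (LinearMap.id : E →ₗ[K] E) = LinearMap.id from
            LinearMap.baseChange_id, LinearMap.id_apply]
      rw [h1, map_zero] at h2
      exact hz.2 h2.symm
    rw [← hvμ]
    exact v.pos hμ0
  -- decomposition lemmas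
  have hTmem : ∀ (T : Set ℝ) (x : E), x ∈ (⨆ ρ ∈ T, specSubspace v A ρ) →
      ∃ (s : Finset ℝ) (f : ℝ → E), (↑s : Set ℝ) ⊆ T ∧ (∀ ρ, f ρ ∈ specSubspace v A ρ) ∧
        (∀ ρ ∉ s, f ρ = 0) ∧ x = ∑ ρ ∈ s, f ρ := by
    intro T x hx
    rw [Submodule.mem_iSup_iff_exists_finsupp] at hx
    obtain ⟨f, hf, hsum⟩ := hx
    refine ⟨f.support, f, ?_, ?_, ?_, ?_⟩
    · intro ρ hρ
      by_contra h
      have hbot : (⨆ _ : ρ ∈ T, specSubspace v A ρ) = ⊥ := by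
        rw [iSup_neg h]
      have := hf ρ
      rw [hbot, Submodule.mem_bot] at this
      rw [Finset.mem_coe, Finsupp.mem_support_iff] at hρ
      exact hρ this
    · intro ρ
      exact (iSup_le fun _ => le_rfl : (⨆ _ : ρ ∈ T, specSubspace v A ρ) ≤ _) (hf ρ)
    · intro ρ hρ
      exact Finsupp.notMem_support_iff.mp hρ
    · rw [← hsum]
      rfl
  have hTmem' : ∀ (T : Set ℝ) (x : E) (s : Finset ℝ) (f : ℝ → E), (↑s : Set ℝ) ⊆ T →
      (∀ ρ, f ρ ∈ specSubspace v A ρ) → x = ∑ ρ ∈ s, f ρ →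
      x ∈ (⨆ ρ ∈ T, specSubspace v A ρ) := by
    intro T x s f hsub hmem hsum
    rw [hsum]
    refine Submodule.sum_mem _ fun ρ hρ => ?_
    exact Submodule.mem_iSup_of_mem ρ (Submodule.mem_iSup_of_mem (hsub hρ) (hmem ρ))
  have hful : ∀ x : E, x ∈ ⨆ ρ ∈ eigAbs v A, specSubspace v A ρ :=
    fun x => mem_iSup_specSubspace v hvext A x
  -- norm lemmas
  have hcomple : ∀ (s : Finset ℝ) (f : ℝ → E), (∀ ρ ∈ s, f ρ ∈ specSubspace v A ρ) →
      ∀ ρ₀ ∈ s, ‖f ρ₀‖ ≤ ‖∑ ρ ∈ s, f ρ‖ := by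
    intro s f hf ρ₀ h₀
    exact le_trans (Finset.le_sup' (fun ρ => ‖f ρ‖) h₀)
      (le_of_eq (hmax s ⟨ρ₀, h₀⟩ f hf).symm)
  have hsumlt : ∀ (s : Finset ℝ) (f : ℝ → E), (∀ ρ ∈ s, f ρ ∈ specSubspace v A ρ) →
      (∀ ρ ∈ s, ‖f ρ‖ < r) → ‖∑ ρ ∈ s, f ρ‖ < r := by
    intro s f hf hlt
    rcases Finset.eq_empty_or_nonempty s with rfl | hs
    · simpa using hr
    · rw [hmax s hs f hf]
      exact (Finset.sup'_lt_iff hs).mpr hlt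
  have hpowmem : ∀ (n : ℕ) (ρ : ℝ) {x : E}, x ∈ specSubspace v A ρ →
      (α ^ n) x ∈ specSubspace v A ρ := by
    intro n ρ x hx
    induction n with
    | zero => simpa using hx
    | succ n ih =>
      rw [pow_succ']
      exact hmemα ρ ih
  have hinvmem : ∀ (n : ℕ) (ρ : ℝ) {x : E}, x ∈ specSubspace v A ρ →
      (α⁻¹ ^ n) x ∈ specSubspace v A ρ := by
    intro n ρ x hx
    induction n with
    | zero => simpa using hx
    | succ n ih =>
      rw [pow_succ']
      exact hmemαs ρ ih
  have hnormpow : ∀ (ρ : ℝ), ρ ∈ eigAbs v A → ∀ {x : E}, x ∈ specSubspace v A ρ →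
      ∀ n : ℕ, ‖(α ^ n) x‖ = ρ ^ n * ‖x‖ := by
    intro ρ hρ x hx n
    induction n with
    | zero => simp
    | succ n ih =>
      have h1 : (α ^ (n + 1)) x = α ((α ^ n) x) := by rw [pow_succ']; rfl
      rw [h1, had ρ hρ _ (hpowmem n ρ hx), ih, pow_succ]
      ring
  have hnorminv : ∀ (ρ : ℝ), ρ ∈ eigAbs v A → ∀ {x : E}, x ∈ specSubspace v A ρ →
      ∀ n : ℕ, ‖(α⁻¹ ^ n) x‖ = (ρ ^ n)⁻¹ * ‖x‖ := by
    intro ρ hρ x hx n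
    have hρ0 : 0 < ρ := hρpos ρ hρ
    induction n with
    | zero => simp
    | succ n ih =>
      have h1 : (α⁻¹ ^ (n + 1)) x = α.symm ((α⁻¹ ^ n) x) := by rw [pow_succ']; rfl
      have h2 : α.symm ((α⁻¹ ^ n) x) ∈ specSubspace v A ρ := hmemαs ρ (hinvmem n ρ hx)
      have h3 := had ρ hρ _ h2
      rw [show α (α.symm ((α⁻¹ ^ n) x)) = (α⁻¹ ^ n) x from α.apply_symm_apply _, ih] at h3
      have h4 : ‖α.symm ((α⁻¹ ^ n) x)‖ = ρ⁻¹ * ((ρ ^ n)⁻¹ * ‖x‖) := by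
        rw [h3, inv_mul_cancel_left₀ hρ0.ne']
      rw [h1, h4, pow_succ, mul_inv]
      ring
  -- Goal 1
  have hplus : {x : E | ∀ n : ℕ, (α⁻¹ ^ n) x ∈ {y : E | ‖y‖ < r}} =
      {y : E | ‖y‖ < r} ∩ ↑(⨆ ρ ∈ Tp, specSubspace v A ρ) := by
    ext x
    simp only [Set.mem_setOf_eq, Set.mem_inter_iff, SetLike.mem_coe]
    constructor
    · intro h
      have hxB : ‖x‖ < r := by simpa using h 0
      obtain ⟨s, f, hsub, hmem, hzero, hsum⟩ := hTmem (eigAbs v A) x (hful x)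
      have hvanish : ∀ ρ ∈ s, ρ < 1 → f ρ = 0 := by
        intro ρ hρs hρ1
        by_contra hne
        have hρe : ρ ∈ eigAbs v A := hsub hρs
        have hρ0 : 0 < ρ := hρpos ρ hρe
        have hnorm0 : 0 < ‖f ρ‖ := norm_pos_iff.mpr hne
        have hinv1 : 1 < ρ⁻¹ := (one_lt_inv₀ hρ0).mpr hρ1
        obtain ⟨n, hn⟩ := pow_unbounded_of_one_lt (r / ‖f ρ‖) hinv1
        have h1 : ‖(α⁻¹ ^ n) (f ρ)‖ ≤ ‖(α⁻¹ ^ n) x‖ := by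
          have hsum' : (α⁻¹ ^ n) x = ∑ ρ' ∈ s, (α⁻¹ ^ n) (f ρ') := by
            rw [hsum, map_sum]
          rw [hsum']
          exact hcomple s _ (fun ρ' _ => hinvmem n ρ' (hmem ρ')) ρ hρs
        rw [hnorminv ρ hρe (hmem ρ) n] at h1
        have h3 : ‖(α⁻¹ ^ n) x‖ < r := h n
        have h5 : r < (ρ ^ n)⁻¹ * ‖f ρ‖ := by
          calc r = r / ‖f ρ‖ * ‖f ρ‖ := by field_simp
            _ < ρ⁻¹ ^ n * ‖f ρ‖ := mul_lt_mul_of_pos_right hn hnorm0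
            _ = (ρ ^ n)⁻¹ * ‖f ρ‖ := by rw [inv_pow]
        linarith
      refine ⟨hxB, hTmem' Tp x (s.filter (fun ρ => 1 ≤ ρ)) f ?_ hmem ?_⟩
      · intro ρ hρ
        rw [Finset.coe_filter, Set.mem_setOf_eq] at hρ
        exact ⟨hsub hρ.1, hρ.2⟩
      · rw [hsum]
        refine (Finset.sum_subset (Finset.filter_subset _ s) ?_).symm
        intro ρ hρs hρn
        rw [Finset.mem_filter] at hρn
        push_neg at hρn
        exact hvanish ρ hρs (hρn hρs)
    · rintro ⟨hxB, hxS⟩ n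
      obtain ⟨s, f, hsub, hmem, hzero, hsum⟩ := hTmem Tp x hxS
      have hsum' : (α⁻¹ ^ n) x = ∑ ρ ∈ s, (α⁻¹ ^ n) (f ρ) := by rw [hsum, map_sum]
      show ‖(α⁻¹ ^ n) x‖ < r
      rw [hsum']
      refine hsumlt s _ (fun ρ _ => hinvmem n ρ (hmem ρ)) ?_
      intro ρ hρs
      obtain ⟨hρe, hρ1⟩ := hsub hρs
      rw [hnorminv ρ hρe (hmem ρ) n]
      have hρ0 : 0 < ρ := hρpos ρ hρe
      have h1 : (ρ ^ n)⁻¹ ≤ 1 := by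
        rw [inv_le_one_iff₀]
        right
        exact one_le_pow₀ hρ1
      calc (ρ ^ n)⁻¹ * ‖f ρ‖ ≤ 1 * ‖f ρ‖ :=
            mul_le_mul_of_nonneg_right h1 (norm_nonneg _)
        _ = ‖f ρ‖ := one_mul _
        _ ≤ ‖x‖ := by rw [hsum]; exact hcomple s f (fun ρ' _ => hmem ρ') ρ hρs
        _ < r := hxB
  -- Goal 2
  have hminus : {x : E | ∀ n : ℕ, (α ^ n) x ∈ {y : E | ‖y‖ < r}} =
      {y : E | ‖y‖ < r} ∩ ↑(⨆ ρ ∈ Tm, specSubspace v A ρ) := by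
    ext x
    simp only [Set.mem_setOf_eq, Set.mem_inter_iff, SetLike.mem_coe]
    constructor
    · intro h
      have hxB : ‖x‖ < r := by simpa using h 0
      obtain ⟨s, f, hsub, hmem, hzero, hsum⟩ := hTmem (eigAbs v A) x (hful x)
      have hvanish : ∀ ρ ∈ s, 1 < ρ → f ρ = 0 := by
        intro ρ hρs hρ1
        by_contra hne
        have hρe : ρ ∈ eigAbs v A := hsub hρs
        have hnorm0 : 0 < ‖f ρ‖ := norm_pos_iff.mpr hne
        obtain ⟨n, hn⟩ := pow_unbounded_of_one_lt (r / ‖f ρ‖) hρ1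
        have h1 : ‖(α ^ n) (f ρ)‖ ≤ ‖(α ^ n) x‖ := by
          have hsum' : (α ^ n) x = ∑ ρ' ∈ s, (α ^ n) (f ρ') := by rw [hsum, map_sum]
          rw [hsum']
          exact hcomple s _ (fun ρ' _ => hpowmem n ρ' (hmem ρ')) ρ hρs
        rw [hnormpow ρ hρe (hmem ρ) n] at h1
        have h3 : ‖(α ^ n) x‖ < r := h n
        have h5 : r < ρ ^ n * ‖f ρ‖ := by
          calc r = r / ‖f ρ‖ * ‖f ρ‖ := by field_simp
            _ < ρ ^ n * ‖f ρ‖ := mul_lt_mul_of_pos_right hn hnorm0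
        linarith
      refine ⟨hxB, hTmem' Tm x (s.filter (fun ρ => ρ ≤ 1)) f ?_ hmem ?_⟩
      · intro ρ hρ
        rw [Finset.coe_filter, Set.mem_setOf_eq] at hρ
        exact ⟨hsub hρ.1, hρ.2⟩
      · rw [hsum]
        refine (Finset.sum_subset (Finset.filter_subset _ s) ?_).symm
        intro ρ hρs hρn
        rw [Finset.mem_filter] at hρn
        push_neg at hρn
        exact hvanish ρ hρs (hρn hρs)
    · rintro ⟨hxB, hxS⟩ n
      obtain ⟨s, f, hsub, hmem, hzero, hsum⟩ := hTmem Tm x hxS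
      have hsum' : (α ^ n) x = ∑ ρ ∈ s, (α ^ n) (f ρ) := by rw [hsum, map_sum]
      show ‖(α ^ n) x‖ < r
      rw [hsum']
      refine hsumlt s _ (fun ρ _ => hpowmem n ρ (hmem ρ)) ?_
      intro ρ hρs
      obtain ⟨hρe, hρ1⟩ := hsub hρs
      rw [hnormpow ρ hρe (hmem ρ) n]
      have hρ0 : 0 < ρ := hρpos ρ hρe
      have h1 : ρ ^ n ≤ 1 := pow_le_one₀ hρ0.le hρ1
      calc ρ ^ n * ‖f ρ‖ ≤ 1 * ‖f ρ‖ := mul_le_mul_of_nonneg_right h1 (norm_nonneg _)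
        _ = ‖f ρ‖ := one_mul _
        _ ≤ ‖x‖ := by rw [hsum]; exact hcomple s f (fun ρ' _ => hmem ρ') ρ hρs
        _ < r := hxB
  refine ⟨hplus, hminus, ?_, ?_⟩
  -- Goal 3
  · ext x
    constructor
    · intro hxBmem
      have hxB : ‖x‖ < r := hxBmem
      obtain ⟨s, f, hsub, hmem, hzero, hsum⟩ := hTmem (eigAbs v A) x (hful x)
      have hcompllt : ∀ ρ ∈ s, ‖f ρ‖ < r := by
        intro ρ hρs
        calc ‖f ρ‖ ≤ ‖x‖ := by rw [hsum]; exact hcomple s f (fun ρ' _ => hmem ρ') ρ hρs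
          _ < r := hxB
      have hu : (∑ ρ ∈ s.filter (fun ρ => 1 ≤ ρ), f ρ) ∈
          {x : E | ∀ n : ℕ, (α⁻¹ ^ n) x ∈ {y : E | ‖y‖ < r}} := by
        rw [hplus]
        refine ⟨?_, ?_⟩
        · exact hsumlt _ f (fun ρ _ => hmem ρ) (fun ρ hρ =>
            hcompllt ρ (Finset.mem_of_mem_filter ρ hρ))
        · refine SetLike.mem_coe.mpr (hTmem' Tp _ _ f ?_ hmem rfl)
          intro ρ hρ
          rw [Finset.coe_filter, Set.mem_setOf_eq] at hρ
          exact ⟨hsub hρ.1, hρ.2⟩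
      have hw : (∑ ρ ∈ s.filter (fun ρ => ¬ 1 ≤ ρ), f ρ) ∈
          {x : E | ∀ n : ℕ, (α ^ n) x ∈ {y : E | ‖y‖ < r}} := by
        rw [hminus]
        refine ⟨?_, ?_⟩
        · exact hsumlt _ f (fun ρ _ => hmem ρ) (fun ρ hρ =>
            hcompllt ρ (Finset.mem_of_mem_filter ρ hρ))
        · refine SetLike.mem_coe.mpr (hTmem' Tm _ _ f ?_ hmem rfl)
          intro ρ hρ
          rw [Finset.coe_filter, Set.mem_setOf_eq] at hρ
          exact ⟨hsub hρ.1, (lt_of_not_ge hρ.2).le⟩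
      exact ⟨_, hu, _, hw, by rw [hsum, Finset.sum_filter_add_sum_filter_not]⟩
    · rintro ⟨u, hu, w, hw, rfl⟩
      have hu0 : ‖u‖ < r := by simpa using hu 0
      have hw0 : ‖w‖ < r := by simpa using hw 0
      exact lt_of_le_of_lt (hult u w) (max_lt hu0 hw0)
  -- Goal 4
  · rw [hplus]
    have hG1 : ∀ y ∈ ⋃ n : ℕ, (fun x : E => (α ^ n) x) ''
        ({y : E | ‖y‖ < r} ∩ ↑(⨆ ρ ∈ Tp, specSubspace v A ρ)),
        y ∈ (⨆ ρ ∈ Tp, specSubspace v A ρ) ∧ ∃ (t : Finset ℝ) (g : ℝ → E),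
          (↑t : Set ℝ) ⊆ Tp ∧ (∀ ρ, g ρ ∈ specSubspace v A ρ) ∧ (∀ ρ ∉ t, g ρ = 0) ∧
          y = ∑ ρ ∈ t, g ρ ∧ ‖g 1‖ < r := by
      intro y hy
      rw [Set.mem_iUnion] at hy
      obtain ⟨n, z, ⟨hzB, hzS⟩, rfl⟩ := hy
      rw [SetLike.mem_coe] at hzS
      rw [Set.mem_setOf_eq] at hzB
      obtain ⟨s, f, hsub, hmem, hzero, hsum⟩ := hTmem Tp z hzS
      have hsum' : (α ^ n) z = ∑ ρ ∈ s, (α ^ n) (f ρ) := by rw [hsum, map_sum]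
      refine ⟨hTmem' Tp _ s _ hsub (fun ρ => hpowmem n ρ (hmem ρ)) hsum',
        s, fun ρ => (α ^ n) (f ρ), hsub, fun ρ => hpowmem n ρ (hmem ρ),
        fun ρ hρ => by show (α ^ n) (f ρ) = 0; rw [hzero ρ hρ, map_zero], hsum', ?_⟩
      show ‖(α ^ n) (f 1)‖ < r
      by_cases h1s : (1 : ℝ) ∈ s
      · rw [hnormpow 1 (hsub h1s).1 (hmem 1) n, one_pow, one_mul]
        calc ‖f 1‖ ≤ ‖z‖ := by rw [hsum]; exact hcomple s f (fun ρ' _ => hmem ρ') 1 h1s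
          _ < r := hzB
      · rw [hzero 1 h1s, map_zero, norm_zero]
        exact hr
    have hG2 : ∀ (x : E) (s : Finset ℝ) (f : ℝ → E), (↑s : Set ℝ) ⊆ Tp →
        (∀ ρ, f ρ ∈ specSubspace v A ρ) → (∀ ρ ∉ s, f ρ = 0) → x = ∑ ρ ∈ s, f ρ →
        ‖f 1‖ < r → x ∈ ⋃ n : ℕ, (fun x : E => (α ^ n) x) ''
          ({y : E | ‖y‖ < r} ∩ ↑(⨆ ρ ∈ Tp, specSubspace v A ρ)) := by
      intro x s f hsub hmem hzero hsum hf1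
      have hev : ∀ ρ ∈ s, ∀ᶠ n : ℕ in Filter.atTop, (ρ ^ n)⁻¹ * ‖f ρ‖ < r := by
        intro ρ hρs
        obtain ⟨hρe, hρ1⟩ := hsub hρs
        have hρ0 : 0 < ρ := hρpos ρ hρe
        rcases eq_or_lt_of_le hρ1 with heq | hlt
        · subst heq
          refine Filter.Eventually.of_forall fun n => ?_
          simpa using hf1
        · have htend : Filter.Tendsto (fun n : ℕ => (ρ ^ n)⁻¹ * ‖f ρ‖)
              Filter.atTop (nhds (0 * ‖f ρ‖)) := by
            refine Filter.Tendsto.mul_const _ ?_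
            simp only [← inv_pow]
            exact tendsto_pow_atTop_nhds_zero_of_lt_one (inv_nonneg.mpr hρ0.le)
              (inv_lt_one_of_one_lt₀ hlt)
          rw [zero_mul] at htend
          exact htend.eventually_lt_const hr
      obtain ⟨N, hN⟩ := ((Finset.eventually_all (I := s)).mpr hev).exists
      have hzsum : (α⁻¹ ^ N) x = ∑ ρ ∈ s, (α⁻¹ ^ N) (f ρ) := by rw [hsum, map_sum]
      have hzB : ‖(α⁻¹ ^ N) x‖ < r := by
        rw [hzsum]
        refine hsumlt s _ (fun ρ _ => hinvmem N ρ (hmem ρ)) ?_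
        intro ρ hρs
        rw [hnorminv ρ (hsub hρs).1 (hmem ρ) N]
        exact hN ρ hρs
      have hzS : (α⁻¹ ^ N) x ∈ (⨆ ρ ∈ Tp, specSubspace v A ρ) :=
        hTmem' Tp _ s _ hsub (fun ρ => hinvmem N ρ (hmem ρ)) hzsum
      rw [Set.mem_iUnion]
      refine ⟨N, (α⁻¹ ^ N) x, ⟨hzB, SetLike.mem_coe.mpr hzS⟩, ?_⟩
      show (α ^ N) ((α⁻¹ ^ N) x) = x
      have hmi : (α ^ N) * (α⁻¹ ^ N) = 1 := by rw [inv_pow, mul_inv_cancel]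
      show ((α ^ N) * (α⁻¹ ^ N)) x = x
      rw [hmi]
      rfl
    rw [← isOpen_compl_iff, Metric.isOpen_iff]
    intro x hx
    by_cases hxS : x ∈ (⨆ ρ ∈ Tp, specSubspace v A ρ)
    · obtain ⟨s, f, hsub, hmem, hzero, hsum⟩ := hTmem Tp x hxS
      have hf1 : ¬ ‖f 1‖ < r := fun hlt => hx (hG2 x s f hsub hmem hzero hsum hlt)
      refine ⟨r, hr, fun y hy => ?_⟩
      rw [Set.mem_compl_iff]
      intro hyU
      obtain ⟨hyS, t, g, htsub, hgmem, hgzero, hgsum, hg1⟩ := hG1 y hyU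
      have hdiff : x - y = ∑ ρ ∈ s ∪ t, (f ρ - g ρ) := by
        rw [Finset.sum_sub_distrib,
          ← Finset.sum_subset Finset.subset_union_left
            (fun ρ _ hρ => hzero ρ hρ),
          ← Finset.sum_subset Finset.subset_union_right
            (fun ρ _ hρ => hgzero ρ hρ),
          ← hsum, ← hgsum]
      by_cases h1 : (1 : ℝ) ∈ s ∪ t
      · have hcomp1 : ‖f 1 - g 1‖ ≤ ‖x - y‖ := by
          rw [hdiff]
          exact hcomple (s ∪ t) _
            (fun ρ _ => Submodule.sub_mem _ (hmem ρ) (hgmem ρ)) 1 h1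
        have hxy : ‖x - y‖ < r := by
          rw [← dist_eq_norm, dist_comm]
          exact hy
        have hchain : ‖f 1‖ < r := by
          have h6 := hult (f 1 - g 1) (g 1)
          rw [sub_add_cancel] at h6
          exact lt_of_le_of_lt h6 (max_lt (lt_of_le_of_lt hcomp1 hxy) hg1)
        exact hf1 hchain
      · have hz1 : f 1 = 0 := hzero 1 (fun h => h1 (Finset.mem_union_left _ h))
        exact hf1 (by rw [hz1, norm_zero]; exact hr)
    · have hUS : (⋃ n : ℕ, (fun x : E => (α ^ n) x) ''
          ({y : E | ‖y‖ < r} ∩ ↑(⨆ ρ ∈ Tp, specSubspace v A ρ))) ⊆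
          ↑(⨆ ρ ∈ Tp, specSubspace v A ρ) :=
        fun y hy => SetLike.mem_coe.mpr (hG1 y hy).1
      have hSc : IsClosed (↑(⨆ ρ ∈ Tp, specSubspace v A ρ) : Set E) :=
        Submodule.closed_of_finiteDimensional _
      obtain ⟨ε, hε, hball⟩ := Metric.isOpen_iff.mp hSc.isOpen_compl x hxS
      exact ⟨ε, hε, fun y hy hyU => hball hy (hUS hyU)⟩
end

section
/- Let G be a topological group in which every ascending union of closed subgroups is closed (e.g., G has an open subgroup satisfying the ascending chain condition on closed subgroups), with a countable decreasing neighbourhood basis at 1 consisting of open subgroups. Then for every automorphism α of G, the contraction group U_α is closed in G. -/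
open Filter Topology

/-- If in a topological group `G` every ascending union of closed subgroups is closed, and
`G` has a decreasing sequence of open subgroups forming a basis of identity neighbourhoods,
then the contraction group of any automorphism of `G` is closed. -/
theorem contraction_group_closed {G : Type*} [Group G] [TopologicalSpace G]
    [IsTopologicalGroup G]
    (hascend : ∀ H : ℕ → Subgroup G, Monotone H → (∀ n, IsClosed (H n : Set G)) →
      IsClosed (⋃ n, (H n : Set G)))
    (V : ℕ → Subgroup G)
    (hVopen : ∀ n, IsOpen (V n : Set G))
    (hVdec : ∀ n, V (n + 1) ≤ V n)
    (hVbasis : ∀ W ∈ 𝓝 (1 : G), ∃ n, (V n : Set G) ⊆ W)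
    (α : MulAut G) (hα : Continuous α) (hα' : Continuous α.symm) :
    IsClosed {x : G | Tendsto (fun k : ℕ => (α ^ k) x) atTop (𝓝 1)} := by
  -- continuity of iterates
  have hkcont : ∀ k : ℕ, Continuous ((α ^ k : MulAut G) : G → G) := by
    intro k
    induction k with
    | zero => simpa using continuous_id
    | succ k ih =>
      have h : ((α ^ (k + 1) : MulAut G) : G → G)
          = (α : G → G) ∘ ((α ^ k : MulAut G) : G → G) := by
        ext x; simp [pow_succ']
      rw [h]; exact hα.comp ih
  have hVclosed : ∀ m, IsClosed (V m : Set G) := fun m =>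
    (V m).isClosed_of_isOpen (hVopen m)
  -- the ascending closed subgroups
  set H : ℕ → ℕ → Subgroup G := fun m n =>
    ⨅ (k : ℕ) (_ : n ≤ k), Subgroup.comap (α ^ k : MulAut G).toMonoidHom (V m) with hH
  have hmem : ∀ m n x, x ∈ H m n ↔ ∀ k, n ≤ k → (α ^ k) x ∈ V m := by
    intro m n x
    simp [hH, Subgroup.mem_iInf, Subgroup.mem_comap]
  have hclosed : ∀ m n, IsClosed (H m n : Set G) := by
    intro m n
    have : (H m n : Set G) =
        ⋂ (k : ℕ) (_ : n ≤ k), ((α ^ k : MulAut G) : G → G) ⁻¹' (V m : Set G) := by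
      ext x
      simp [hmem m n x, Set.mem_iInter]
    rw [this]
    exact isClosed_iInter fun k => isClosed_iInter fun _ =>
      (hVclosed m).preimage (hkcont k)
  have hmono : ∀ m, Monotone (H m) := by
    intro m n n' hnn' x hx
    rw [hmem] at hx ⊢
    exact fun k hk => hx k (le_trans hnn' hk)
  have hset : {x : G | Tendsto (fun k : ℕ => (α ^ k) x) atTop (𝓝 1)}
      = ⋂ m, ⋃ n, (H m n : Set G) := by
    ext x
    simp only [Set.mem_setOf_eq, Set.mem_iInter, Set.mem_iUnion, SetLike.mem_coe, hmem]
    constructor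
    · intro hx m
      have h1 : (V m : Set G) ∈ 𝓝 (1 : G) := (hVopen m).mem_nhds (one_mem _)
      have := hx.eventually (eventually_mem_set.2 h1)
      rcases eventually_atTop.1 this with ⟨n, hn⟩
      exact ⟨n, hn⟩
    · intro hx
      rw [tendsto_def]
      intro W hW
      rcases hVbasis W hW with ⟨m, hm⟩
      rcases hx m with ⟨n, hn⟩
      exact mem_atTop_sets.2 ⟨n, fun k hk => hm (hn k hk)⟩
  rw [hset]
  exact isClosed_iInter fun m => hascend (H m) (hmono m) (hclosed m)
end

section
/- Let G be a topological group having an open subgroup V satisfying the ascending chain condition on closed subgroups (of V). Then for any ascending sequence H_1 ⊆ H_2 ⊆ ⋯ of closed subgroups of G, the union H = ⋃_n H_n is a closed subgroup of G. -/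
open Pointwise

/-- If a topological group `G` has an open subgroup `V` satisfying the ascending chain
condition on closed subgroups of `V`, then any ascending union of closed subgroups of `G`
is a closed subgroup of `G`. -/
theorem ascending_union_closed_of_acc {G : Type*} [Group G] [TopologicalSpace G]
    [IsTopologicalGroup G] (V : Subgroup G) (hVopen : IsOpen (V : Set G))
    (hacc : ∀ C : ℕ → Subgroup G, Monotone C → (∀ n, C n ≤ V) →
      (∀ n, IsClosed (C n : Set G)) → ∃ N, ∀ n, N ≤ n → C n = C N)
    (H : ℕ → Subgroup G) (hmono : Monotone H) (hclosed : ∀ n, IsClosed (H n : Set G)) :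
    IsClosed (⋃ n, (H n : Set G)) ∧ ∃ S : Subgroup G, (S : Set G) = ⋃ n, (H n : Set G) := by
  have hVclosed : IsClosed (V : Set G) := V.isClosed_of_isOpen hVopen
  set C : ℕ → Subgroup G := fun n => H n ⊓ V with hC
  have hCmono : Monotone C := fun a b hab => inf_le_inf_right V (hmono hab)
  have hCclosed : ∀ n, IsClosed (C n : Set G) := fun n => by
    simpa [hC] using (hclosed n).inter hVclosed
  obtain ⟨N, hN⟩ := hacc C hCmono (fun n => inf_le_right) hCclosed
  set W : Subgroup G := C N with hW
  set U : Set G := ⋃ n, (H n : Set G) with hU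
  -- key: for y ∈ H n with n ≥ N, U ∩ yV = yW
  have key : ∀ (y : G) (n : ℕ), N ≤ n → y ∈ H n →
      U ∩ (y • (V : Set G)) = y • (W : Set G) := by
    intro y n hn hy
    ext z
    constructor
    · rintro ⟨hzU, hzV⟩
      obtain ⟨_, ⟨m, rfl⟩, hzm⟩ := hzU
      obtain ⟨v, hv, rfl⟩ := hzV
      refine ⟨v, ?_, rfl⟩
      have hyinv : y⁻¹ * (y * v) ∈ H (max n m) := by
        exact mul_mem (inv_mem (hmono (le_max_left n m) hy)) (hmono (le_max_right n m) hzm)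
      have : y⁻¹ * (y * v) ∈ C (max n m) := ⟨hyinv, by simpa using hv⟩
      rw [hN (max n m) (le_trans hn (le_max_left n m))] at this
      simpa using this
    · rintro ⟨w, hw, rfl⟩
      have hwHN : w ∈ H N := (inf_le_left : C N ≤ H N) hw
      have hwV : w ∈ V := (inf_le_right : C N ≤ V) hw
      exact ⟨Set.mem_iUnion.2 ⟨n, mul_mem hy (hmono hn hwHN)⟩, ⟨w, hwV, rfl⟩⟩
  have hUclosed : IsClosed U := by
    rw [← closure_subset_iff_isClosed]
    intro x hx
    -- x • V is an open neighborhood of x meeting U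
    have hxV : x ∈ x • (V : Set G) := ⟨1, one_mem V, mul_one x⟩
    have hopen : IsOpen (x • (V : Set G)) := hVopen.smul x
    obtain ⟨y, hyxV, hyU⟩ := mem_closure_iff.1 hx _ hopen hxV
    obtain ⟨_, ⟨m, rfl⟩, hym⟩ := hyU
    set n := max m N with hn
    have hyn : y ∈ H n := hmono (le_max_left m N) hym
    -- x ∈ y • V
    obtain ⟨v, hv, rfl⟩ := hyxV
    have hxyV : x ∈ (x * v) • (V : Set G) := ⟨v⁻¹, inv_mem hv, by simp [smul_eq_mul]⟩
    have hopen' : IsOpen ((x * v) • (V : Set G)) := hVopen.smul _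
    have hx2 : x ∈ (x * v) • (V : Set G) ∩ closure U := ⟨hxyV, hx⟩
    have hx3 : x ∈ closure ((x * v) • (V : Set G) ∩ U) := hopen'.inter_closure hx2
    rw [Set.inter_comm, key (x * v) n (le_max_right m N) hyn] at hx3
    have hWclosed : IsClosed ((x * v) • (W : Set G)) := (hCclosed N).smul _
    have hxW : x ∈ (x * v) • (W : Set G) := by rwa [hWclosed.closure_eq] at hx3
    obtain ⟨w, hw, hwx⟩ := hxW
    have : (x * v) * w ∈ U :=
      Set.mem_iUnion.2 ⟨n, mul_mem hyn (hmono (le_max_right m N) ((inf_le_left : C N ≤ H N) hw))⟩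
    simpa [smul_eq_mul] using hwx ▸ this
  refine ⟨hUclosed, ⨆ n, H n, ?_⟩
  exact Subgroup.coe_iSup_of_directed (directed_of_isDirected_le hmono)
end

section
/- Let G be a metrizable topological group, H a topological group, φ : G → H an injective continuous homomorphism, and α, β automorphisms of G and H respectively with β ∘ φ = φ ∘ α. If U_β ∩ M_β = {1} in H, then U_α ∩ M_α = {1} in G. -/
open Filter Topology

/-- If `φ : G → H` is an injective continuous homomorphism intertwining automorphisms
`α` of `G` and `β` of `H` (with `G` metrizable), and `U_β ∩ M_β = {1}` in `H`, then
`U_α ∩ M_α = {1}` in `G`. -/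
theorem contraction_levi_trivial_of_embedding {G H : Type*}
    [Group G] [TopologicalSpace G] [IsTopologicalGroup G] [TopologicalSpace.MetrizableSpace G]
    [Group H] [TopologicalSpace H] [IsTopologicalGroup H]
    (φ : G →* H) (hφcont : Continuous φ) (hφinj : Function.Injective φ)
    (α : MulAut G) (β : MulAut H) (hcomm : ∀ g : G, β (φ g) = φ (α g))
    (hH : {y : H | Tendsto (fun k : ℕ => (β ^ k) y) atTop (𝓝 1)} ∩
        {y : H | IsCompact (closure (Set.range fun n : ℤ => (β ^ n) y))} = {1}) :
    {x : G | Tendsto (fun k : ℕ => (α ^ k) x) atTop (𝓝 1)} ∩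
      {x : G | IsCompact (closure (Set.range fun n : ℤ => (α ^ n) x))} = {1} := by
  have hinv : ∀ g : G, β⁻¹ (φ g) = φ (α⁻¹ g) := by
    intro g
    have := hcomm (α⁻¹ g)
    simp only [MulAut.apply_inv_self] at this
    rw [← this, MulAut.inv_apply_self]
  have hnat : ∀ (k : ℕ) (g : G), (β ^ k) (φ g) = φ ((α ^ k) g) := by
    intro k
    induction k with
    | zero => intro g; simp
    | succ n ih =>
      intro g
      rw [pow_succ, pow_succ]
      simp only [MulAut.mul_apply]
      rw [hcomm g, ih (α g)]
  have hint : ∀ (n : ℤ) (g : G), (β ^ n) (φ g) = φ ((α ^ n) g) := by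
    intro n
    induction n using Int.induction_on with
    | zero => intro g; simp
    | succ k ih =>
      intro g
      rw [zpow_add_one, zpow_add_one]
      simp only [MulAut.mul_apply]
      rw [hcomm g, ih (α g)]
    | pred k ih =>
      intro g
      rw [zpow_sub_one, zpow_sub_one]
      simp only [MulAut.mul_apply]
      rw [hinv g, ih (α⁻¹ g)]
  ext x
  simp only [Set.mem_inter_iff, Set.mem_setOf_eq, Set.mem_singleton_iff]
  constructor
  · rintro ⟨hu, hm⟩
    have hφx : φ x ∈ ({1} : Set H) := by
      rw [← hH]
      constructor
      · show Tendsto (fun k : ℕ => (β ^ k) (φ x)) atTop (𝓝 1)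
        have : (fun k : ℕ => (β ^ k) (φ x)) = fun k => φ ((α ^ k) x) := by
          funext k; exact hnat k x
        rw [this]
        have := (hφcont.tendsto 1).comp hu
        simpa [Function.comp_def] using this
      · show IsCompact (closure (Set.range fun n : ℤ => (β ^ n) (φ x)))
        have hsub : (Set.range fun n : ℤ => (β ^ n) (φ x)) ⊆
            φ '' closure (Set.range fun n : ℤ => (α ^ n) x) := by
          rintro _ ⟨n, rfl⟩
          exact ⟨(α ^ n) x, subset_closure ⟨n, rfl⟩, (hint n x).symm⟩
        have hKc : IsCompact (closure (φ '' closure (Set.range fun n : ℤ => (α ^ n) x))) :=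
          (hm.image hφcont).closure
        exact hKc.of_isClosed_subset isClosed_closure
          (closure_mono hsub)
    have : φ x = φ 1 := by simpa using hφx
    exact hφinj this
  · rintro rfl
    refine ⟨?_, ?_⟩
    · simp only [map_one]; exact tendsto_const_nhds
    · have : (Set.range fun n : ℤ => (α ^ n) (1 : G)) = {1} := by
        simp [Set.range_const]
      rw [this]
      exact isCompact_singleton.closure
end
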